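/- arXiv:2601.09190 — 4 statements merged into one kernel-verified Lean document; each statement's English description precedes it below -/
import Mathlib

section
/- Existence for the stationary Oseen-type variational inequality (Lemma 3.1): Assume the Gelfand-triple setting and hypotheses (H1) and (H2). Let w ∈ V, f ∈ H, and let λ ≥ C_{θ₁,1/4}·‖w‖_V^{θ₁}, where C_{θ₁,1/4} is the constant from the rephrased form of (H1) with ε = 1/4. Then there exists u ∈ V such that λ·(u, v−u) + a(u, v−u) + ⟨B(w,u), v−u⟩ + φ(v) − φ(u) ≥ (f, v−u) for all v ∈ V. In particular, u ∈ D(∂φ). -/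
open MeasureTheory Set Filter Topology

set_option linter.unusedVariables false
set_option linter.unusedSectionVars false


section Prox
variable {V : Type*} [NormedAddCommGroup V] [InnerProductSpace ℝ V] [CompleteSpace V]

/-- φ p is not ⊤ if the prox inequality holds at some proper point. -/
lemma phi_ne_top_of_le {φ : V → EReal} (hbot : ∀ v, φ v ≠ ⊥) {c : ℝ} {p : V} {y : EReal}
    (hy : y ≠ ⊤) (h : (c : EReal) + φ p ≤ y) : φ p ≠ ⊤ := by
  intro hp
  rw [hp, EReal.coe_add_top] at h
  exact hy (top_le_iff.mp h)

lemma prox_nonexpansive (φ : V → EReal) (hproper : ∃ v, φ v ≠ ⊤) (hbot : ∀ v, φ v ≠ ⊥)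
    (ρ : ℝ) (hρ : 0 < ρ) (x₁ x₂ p₁ p₂ : V)
    (h₁ : ∀ v : V, (↑(ρ⁻¹ * (inner ℝ (x₁ - p₁) (v - p₁) : ℝ)) : EReal) + φ p₁ ≤ φ v)
    (h₂ : ∀ v : V, (↑(ρ⁻¹ * (inner ℝ (x₂ - p₂) (v - p₂) : ℝ)) : EReal) + φ p₂ ≤ φ v) :
    ‖p₁ - p₂‖ ≤ ‖x₁ - x₂‖ := by
  obtain ⟨v₀, hv₀⟩ := hproper
  have hp₁ : φ p₁ ≠ ⊤ := phi_ne_top_of_le hbot hv₀ (h₁ v₀)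
  have hp₂ : φ p₂ ≠ ⊤ := phi_ne_top_of_le hbot hv₀ (h₂ v₀)
  have e₁ := h₁ p₂
  have e₂ := h₂ p₁
  rw [← EReal.coe_toReal hp₁ (hbot p₁), ← EReal.coe_toReal hp₂ (hbot p₂),
    ← EReal.coe_add, EReal.coe_le_coe_iff] at e₁ e₂
  have hsum : ρ⁻¹ * (inner ℝ (x₁ - p₁) (p₂ - p₁) : ℝ) + ρ⁻¹ * (inner ℝ (x₂ - p₂) (p₁ - p₂) : ℝ) ≤ 0 := by
    linarith
  have hkey : ‖p₁ - p₂‖ ^ 2 ≤ (inner ℝ (x₁ - x₂) (p₁ - p₂) : ℝ) := by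
    have h0 : (inner ℝ (x₁ - p₁) (p₂ - p₁) : ℝ) + (inner ℝ (x₂ - p₂) (p₁ - p₂) : ℝ) ≤ 0 := by
      have := mul_le_mul_of_nonneg_left hsum (le_of_lt hρ)
      rw [mul_zero, mul_add, ← mul_assoc, ← mul_assoc, mul_inv_cancel₀ (ne_of_gt hρ),
        one_mul, one_mul] at this
      exact this
    have hA : (inner ℝ (x₁ - p₁) (p₂ - p₁) : ℝ) = -(inner ℝ (x₁ - p₁) (p₁ - p₂) : ℝ) := by
      rw [show p₂ - p₁ = -(p₁ - p₂) by abel, inner_neg_right]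
    rw [hA] at h0
    have hB : (inner ℝ (x₂ - p₂) (p₁ - p₂) : ℝ) - (inner ℝ (x₁ - p₁) (p₁ - p₂) : ℝ)
        = inner ℝ ((x₂ - p₂) - (x₁ - p₁)) (p₁ - p₂) := (inner_sub_left _ _ _).symm
    have hC : (x₂ - p₂) - (x₁ - p₁) = (x₂ - x₁) + (p₁ - p₂) := by abel
    have e : (inner ℝ ((x₂ - x₁) + (p₁ - p₂)) (p₁ - p₂) : ℝ) ≤ 0 := by
      rw [← hC, ← hB]; linarith
    rw [inner_add_left] at e
    have hD : (inner ℝ (x₂ - x₁) (p₁ - p₂) : ℝ) = -(inner ℝ (x₁ - x₂) (p₁ - p₂) : ℝ) := by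
      rw [show x₂ - x₁ = -(x₁ - x₂) by abel, inner_neg_left]
    rw [hD] at e
    have hself : (inner ℝ (p₁ - p₂) (p₁ - p₂) : ℝ) = ‖p₁ - p₂‖ ^ 2 := real_inner_self_eq_norm_sq _
    linarith
  have hcs : (inner ℝ (x₁ - x₂) (p₁ - p₂) : ℝ) ≤ ‖x₁ - x₂‖ * ‖p₁ - p₂‖ := real_inner_le_norm _ _
  rcases eq_or_lt_of_le (norm_nonneg (p₁ - p₂)) with h0 | h0
  · rw [← h0]; exact norm_nonneg _
  · nlinarith
end Prox

section ProxExist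
variable {V : Type*} [NormedAddCommGroup V] [InnerProductSpace ℝ V] [CompleteSpace V]

set_option maxHeartbeats 2000000 in
lemma prox_exists (φ : V → EReal)
    (hconv : ∀ x y : V, ∀ t : ℝ, 0 ≤ t → t ≤ 1 →
      φ (t • x + (1 - t) • y) ≤ (t : EReal) * φ x + ((1 - t : ℝ) : EReal) * φ y)
    (hproper : ∃ v, φ v ≠ ⊤) (hbot : ∀ v, φ v ≠ ⊥)
    (hlsc : LowerSemicontinuous φ)
    (C : ℝ) (hC : 0 < C) (hlb : ∀ v : V, (↑(-(C * (‖v‖ + 1))) : EReal) ≤ φ v)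
    (ρ : ℝ) (hρ : 0 < ρ) (x : V) :
    ∃ p : V, ∀ v : V, (↑(ρ⁻¹ * (inner ℝ (x - p) (v - p) : ℝ)) : EReal) + φ p ≤ φ v := by
  obtain ⟨v₀, hv₀⟩ := hproper
  set φ' : V → ℝ := fun v => (φ v).toReal with hφ'
  set q : V → ℝ := fun v => ‖v - x‖ ^ 2 / (2 * ρ) with hqdef
  set G : V → ℝ := fun v => q v + φ' v with hGdef
  have hcoe : ∀ v : V, φ v ≠ ⊤ → φ v = ((φ' v : ℝ) : EReal) :=
    fun v hv => (EReal.coe_toReal hv (hbot v)).symm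
  have hφ'lb : ∀ v : V, φ v ≠ ⊤ → -(C * (‖v‖ + 1)) ≤ φ' v := by
    intro v hv
    have := EReal.toReal_le_toReal (hlb v) (EReal.coe_ne_bot _) hv
    rw [EReal.toReal_coe] at this; exact this
  -- lower bound for G
  set m₀ : ℝ := -(ρ * C ^ 2 / 2) - C * (‖x‖ + 1) with hm₀
  have hGlb : ∀ v : V, φ v ≠ ⊤ → m₀ ≤ G v := by
    intro v hv
    have hvn : ‖v‖ ≤ ‖v - x‖ + ‖x‖ := by
      have := norm_add_le (v - x) x
      simpa using this
    have hsq : C * ‖v - x‖ - ρ * C ^ 2 / 2 ≤ ‖v - x‖ ^ 2 / (2 * ρ) := by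
      have h0 : (0 : ℝ) ≤ (‖v - x‖ - ρ * C) ^ 2 / (2 * ρ) := by positivity
      have he : (‖v - x‖ - ρ * C) ^ 2 / (2 * ρ)
          = ‖v - x‖ ^ 2 / (2 * ρ) - C * ‖v - x‖ + ρ * C ^ 2 / 2 := by
        field_simp
        ring
      linarith [he ▸ h0]
    have := hφ'lb v hv
    simp only [hGdef, hqdef, hm₀]
    nlinarith [hsq, this, hvn, hC.le]
  -- the infimum
  set Gset : Set ℝ := G '' {v | φ v ≠ ⊤} with hGset
  have hGne : Gset.Nonempty := ⟨G v₀, v₀, hv₀, rfl⟩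
  have hGbdd : BddBelow Gset := by
    refine ⟨m₀, ?_⟩
    rintro y ⟨v, hv, rfl⟩
    exact hGlb v hv
  set m : ℝ := sInf Gset with hm
  have hm_le : ∀ v : V, φ v ≠ ⊤ → m ≤ G v := fun v hv => csInf_le hGbdd ⟨v, hv, rfl⟩
  -- strong convexity estimate
  have hsc : ∀ u v : V, φ u ≠ ⊤ → φ v ≠ ⊤ →
      m ≤ (G u + G v) / 2 - ‖u - v‖ ^ 2 / (8 * ρ) := by
    intro u v hu hv
    have h12 : (1 : ℝ) - 1 / 2 = 1 / 2 := by norm_num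
    have hmc := hconv u v (1 / 2) (by norm_num) (by norm_num)
    rw [h12, hcoe u hu, hcoe v hv, ← EReal.coe_mul, ← EReal.coe_mul, ← EReal.coe_add] at hmc
    set mid : V := (1 / 2 : ℝ) • u + (1 / 2 : ℝ) • v with hmid
    have hmidtop : φ mid ≠ ⊤ := by
      intro h
      rw [h] at hmc
      exact (EReal.coe_ne_top _) (top_le_iff.mp hmc)
    have hmidreal : φ' mid ≤ (1 / 2) * φ' u + (1 / 2) * φ' v := by
      have := EReal.toReal_le_toReal hmc (hbot _) (EReal.coe_ne_top _)
      rw [EReal.toReal_coe] at this; exact this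
    have nmid : ‖mid - x‖ ^ 2 = ‖u - x‖ ^ 2 / 2 + ‖v - x‖ ^ 2 / 2 - ‖u - v‖ ^ 2 / 4 := by
      have hpar := parallelogram_law_with_norm ℝ ((1 / 2 : ℝ) • (u - x)) ((1 / 2 : ℝ) • (v - x))
      have h1 : (1 / 2 : ℝ) • (u - x) + (1 / 2 : ℝ) • (v - x) = mid - x := by
        rw [hmid]; module
      have h2 : (1 / 2 : ℝ) • (u - x) - (1 / 2 : ℝ) • (v - x) = (1 / 2 : ℝ) • (u - v) := by
        module
      rw [h1, h2] at hpar
      have hn : ∀ z : V, ‖(1 / 2 : ℝ) • z‖ = (1 / 2) * ‖z‖ := fun z => by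
        rw [norm_smul, Real.norm_eq_abs]; norm_num
      rw [hn, hn, hn] at hpar
      nlinarith [hpar]
    have hGm := hm_le mid hmidtop
    have e1 : q mid = q u / 2 + q v / 2 - ‖u - v‖ ^ 2 / (8 * ρ) := by
      simp only [hqdef]
      rw [nmid]
      field_simp
      ring
    simp only [hGdef] at hGm ⊢
    rw [e1] at hGm
    linarith
  -- minimizing sequence
  have hseq : ∀ n : ℕ, ∃ v : V, φ v ≠ ⊤ ∧ G v < m + 1 / (n + 1) := by
    intro n
    have hlt : m < m + 1 / ((n : ℝ) + 1) := by
      have : (0 : ℝ) < 1 / ((n : ℝ) + 1) := by positivity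
      linarith
    obtain ⟨y, hy, hylt⟩ := exists_lt_of_csInf_lt hGne hlt
    obtain ⟨v, hv, rfl⟩ := hy
    exact ⟨v, hv, hylt⟩
  choose vs hvS hvG using hseq
  -- Cauchy
  have hcau : CauchySeq vs := by
    apply cauchySeq_of_le_tendsto_0 (fun N : ℕ => Real.sqrt (8 * ρ / (N + 1)))
    · intro n k N hn hk
      have h1 := hsc (vs n) (vs k) (hvS n) (hvS k)
      have h2 : ‖vs n - vs k‖ ^ 2 ≤ 8 * ρ * ((G (vs n) - m) / 2 + (G (vs k) - m) / 2) := by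
        have h1' : ‖vs n - vs k‖ ^ 2 / (8 * ρ) ≤ (G (vs n) - m) / 2 + (G (vs k) - m) / 2 := by
          linarith
        have := mul_le_mul_of_nonneg_left h1' (by positivity : (0 : ℝ) ≤ 8 * ρ)
        rwa [mul_div_cancel₀ _ (by positivity : (8 : ℝ) * ρ ≠ 0)] at this
      have h3 : G (vs n) - m < 1 / ((n : ℝ) + 1) := by linarith [hvG n]
      have h4 : G (vs k) - m < 1 / ((k : ℝ) + 1) := by linarith [hvG k]
      have h5 : 1 / ((n : ℝ) + 1) ≤ 1 / ((N : ℝ) + 1) := by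
        apply one_div_le_one_div_of_le (by positivity)
        have : (N : ℝ) ≤ (n : ℝ) := by exact_mod_cast hn
        linarith
      have h6 : 1 / ((k : ℝ) + 1) ≤ 1 / ((N : ℝ) + 1) := by
        apply one_div_le_one_div_of_le (by positivity)
        have : (N : ℝ) ≤ (k : ℝ) := by exact_mod_cast hk
        linarith
      have h7 : ‖vs n - vs k‖ ^ 2 ≤ 8 * ρ / ((N : ℝ) + 1) := by
        have hρ8 : (0 : ℝ) < 8 * ρ := by positivity
        calc ‖vs n - vs k‖ ^ 2 ≤ 8 * ρ * ((G (vs n) - m) / 2 + (G (vs k) - m) / 2) := h2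
          _ ≤ 8 * ρ * (1 / ((N : ℝ) + 1) / 2 + 1 / ((N : ℝ) + 1) / 2) := by
              apply mul_le_mul_of_nonneg_left _ hρ8.le
              linarith
          _ = 8 * ρ / ((N : ℝ) + 1) := by ring
      rw [dist_eq_norm]
      exact (Real.le_sqrt (norm_nonneg _) (by positivity)).mpr h7
    · have h8 : Tendsto (fun n : ℕ => 8 * ρ / ((n : ℝ) + 1)) atTop (𝓝 0) := by
        have := tendsto_one_div_add_atTop_nhds_zero_nat.const_mul (8 * ρ)
        simp only [mul_zero] at this
        convert this using 2 with n
        ring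
      have hsqrt := (Real.continuous_sqrt.tendsto 0).comp h8
      rw [Real.sqrt_zero] at hsqrt; exact hsqrt
  obtain ⟨p, hp⟩ := cauchySeq_tendsto_of_complete hcau
  -- q is continuous along the sequence
  have hqc : Tendsto (fun n => q (vs n)) atTop (𝓝 (q p)) := by
    have hcont : Continuous q := by
      simp only [hqdef]
      fun_prop
    exact (hcont.tendsto p).comp hp
  -- key: the limit realizes the infimum
  have hkey : φ p ≤ ((m - q p : ℝ) : EReal) := by
    by_contra hcon
    rw [not_le] at hcon
    obtain ⟨y, hy1, hy2⟩ := EReal.lt_iff_exists_real_btwn.mp hcon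
    have hy1' : m - q p < y := by exact_mod_cast hy1
    have hev : ∀ᶠ n in atTop, (y : EReal) < φ (vs n) := hp.eventually (hlsc p _ hy2)
    have hev2 : ∀ᶠ n in atTop, y + q (vs n) - 1 / ((n : ℝ) + 1) ≤ m := by
      filter_upwards [hev] with n hn
      have hvn : y < φ' (vs n) := by
        rw [hcoe (vs n) (hvS n)] at hn
        exact_mod_cast hn
      have := hvG n
      simp only [hGdef] at this
      linarith
    have hlim : Tendsto (fun n : ℕ => y + q (vs n) - 1 / ((n : ℝ) + 1)) atTop
        (𝓝 (y + q p - 0)) :=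
      (tendsto_const_nhds.add hqc).sub tendsto_one_div_add_atTop_nhds_zero_nat
    have := le_of_tendsto hlim hev2
    simp only [sub_zero] at this
    linarith
  have hptop : φ p ≠ ⊤ := by
    intro h
    rw [h] at hkey
    exact (EReal.coe_ne_top _) (top_le_iff.mp hkey)
  have hGp : G p ≤ m := by
    have := EReal.toReal_le_toReal hkey (hbot p) (EReal.coe_ne_top _)
    simp only [EReal.toReal_coe] at this
    simp only [hGdef]
    have : φ' p ≤ m - q p := this
    linarith
  -- conclusion: variational inequality
  refine ⟨p, fun v => ?_⟩
  by_cases hv : φ v = ⊤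
  · rw [hv]; exact le_top
  · rw [hcoe p hptop, hcoe v hv, ← EReal.coe_add, EReal.coe_le_coe_iff]
    set c : ℝ := ρ⁻¹ * (inner ℝ (x - p) (v - p) : ℝ) with hc
    set I : ℝ := (inner ℝ (p - x) (v - p) : ℝ) with hI
    set N : ℝ := ‖v - p‖ ^ 2 with hN
    have hstep : ∀ t : ℝ, 0 < t → t ≤ 1 → c + φ' p ≤ φ' v + t * N / (2 * ρ) := by
      intro t ht0 ht1
      have hconvt := hconv v p t ht0.le ht1
      rw [hcoe v hv, hcoe p hptop, ← EReal.coe_mul, ← EReal.coe_mul, ← EReal.coe_add] at hconvt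
      set pt : V := t • v + (1 - t) • p with hpt
      have hpttop : φ pt ≠ ⊤ := by
        intro h
        rw [h] at hconvt
        exact (EReal.coe_ne_top _) (top_le_iff.mp hconvt)
      have hptreal : φ' pt ≤ t * φ' v + (1 - t) * φ' p := by
        have := EReal.toReal_le_toReal hconvt (hbot _) (EReal.coe_ne_top _)
        rw [EReal.toReal_coe] at this; exact this
      have hGm := hm_le pt hpttop
      have hptx : pt - x = (p - x) + t • (v - p) := by
        rw [hpt]; module
      have hnorm : ‖pt - x‖ ^ 2 = ‖p - x‖ ^ 2 + 2 * t * I + t ^ 2 * N := by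
        rw [hptx, norm_add_sq_real, real_inner_smul_right, norm_smul, Real.norm_eq_abs,
          abs_of_pos ht0, hI, hN]
        ring
      have h6 : q p + φ' p ≤ q pt + (t * φ' v + (1 - t) * φ' p) := by
        have h := hGp.trans hGm
        simp only [hGdef] at h
        linarith
      have h7 : q pt = q p + t * I / ρ + t ^ 2 * N / (2 * ρ) := by
        simp only [hqdef]
        rw [hnorm]
        field_simp
      rw [h7] at h6
      have hcI : c = -(I / ρ) := by
        rw [hc, hI, show x - p = -(p - x) by abel, inner_neg_left]
        ring
      have h8 : t * (c + φ' p) ≤ t * (φ' v + t * N / (2 * ρ)) := by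
        rw [hcI]
        ring_nf
        ring_nf at h6
        nlinarith [h6]
      exact le_of_mul_le_mul_left h8 ht0
    have hg : Tendsto (fun n : ℕ => φ' v + (1 / ((n : ℝ) + 1)) * N / (2 * ρ)) atTop
        (𝓝 (φ' v)) := by
      have h1 : Tendsto (fun n : ℕ => (1 / ((n : ℝ) + 1)) * (N / (2 * ρ))) atTop (𝓝 0) := by
        have := tendsto_one_div_add_atTop_nhds_zero_nat.mul_const (N / (2 * ρ))
        simpa using this
      have h2 := tendsto_const_nhds.add h1 (f := fun _ : ℕ => φ' v)
      simp only [add_zero] at h2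
      convert h2 using 2 with n
      ring
    refine ge_of_tendsto' hg fun n => ?_
    exact hstep (1 / ((n : ℝ) + 1)) (by positivity) (by
      rw [div_le_one (by positivity)]
      linarith [Nat.cast_nonneg (α := ℝ) n])
end ProxExist


set_option maxHeartbeats 2000000 in
/-- **Existence for the stationary Oseen-type variational inequality** (Lemma 3.1).
The Gelfand triple `V ⊂ H = H' ⊂ V'` is encoded by a continuous, injective, dense and compact
embedding `ι : V →L[ℝ] H`; the Navier–Stokes nonlinearity `B : V × V → V'` is encoded through
the bounded trilinear form `b u v w = ⟨B(u,v), w⟩`; `φ : V → (−∞,+∞]` is convex, proper and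
lower semicontinuous.  The variational inequality
`λ(u,v−u) + a(u,v−u) + ⟨B(w,u),v−u⟩ + φ(v) − φ(u) ≥ (f,v−u)` is written in the equivalent
subtraction-free form `((f,v−u) − λ(u,v−u) − a(u,v−u) − ⟨B(w,u),v−u⟩ : EReal) + φ(u) ≤ φ(v)`. -/
theorem exists_solution_stationary_oseen_VI
    {V H : Type*}
    [NormedAddCommGroup V] [InnerProductSpace ℝ V] [CompleteSpace V]
    [NormedAddCommGroup H] [InnerProductSpace ℝ H] [CompleteSpace H]
    -- Gelfand triple: continuous, dense, compact embedding V ↪ H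
    (ι : V →L[ℝ] H) (hι_inj : Function.Injective ι) (hι_dense : DenseRange ι)
    (hι_cpt : IsCompactOperator (⇑ι))
    -- the bilinear form a, with a(v,v) = ‖v‖_V²
    (a : V →L[ℝ] V →L[ℝ] ℝ) (ha : ∀ v : V, a v v = ‖v‖ ^ 2)
    -- the Navier–Stokes type nonlinearity, as a bounded trilinear form
    (b : V →L[ℝ] V →L[ℝ] V →L[ℝ] ℝ)
    (CB : ℝ) (hCB : 0 < CB) (hb : ∀ u v z : V, |b u v z| ≤ CB * ‖u‖ * ‖v‖ * ‖z‖)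
    -- the monotone type nonlinearity φ
    (φ : V → EReal)
    (hφ_conv : ∀ x y : V, ∀ t : ℝ, 0 ≤ t → t ≤ 1 →
      φ (t • x + (1 - t) • y) ≤ (t : EReal) * φ x + ((1 - t : ℝ) : EReal) * φ y)
    (hφ_proper : ∃ v, φ v ≠ ⊤) (hφ_bot : ∀ v, φ v ≠ ⊥)
    (hφ_lsc : LowerSemicontinuous φ)
    (Cφ1 : ℝ) (hCφ1 : 0 < Cφ1)
    (hφ_lb : ∀ v : V, (↑(-(Cφ1 * (‖v‖ + 1))) : EReal) ≤ φ v)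
    -- (H1), raw form with exponent β₁ ∈ (0,1]
    (C1 β1 : ℝ) (hC1 : 0 < C1) (hβ1 : 0 < β1 ∧ β1 ≤ 1)
    (hH1 : ∀ u v : V, |b u v v| ≤ C1 * ‖u‖ * ‖v‖ * ‖ι v‖ ^ β1 * ‖v‖ ^ (1 - β1))
    -- (H1), rephrased form with θ₁ = 2/β₁ and ε = 1/4, with constant C_{θ₁,1/4}
    (Cθ1 : ℝ) (hCθ1 : 0 < Cθ1)
    (hH1' : ∀ u v : V, |b u v v| ≤ Cθ1 * ‖u‖ ^ (2 / β1) * ‖ι v‖ ^ 2 + (1 / 4) * ‖v‖ ^ 2)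
    -- (H2): weak sequential continuity
    (hH2 : ∀ u : V, ∀ (vj wj : ℕ → V) (v w : V),
      (∀ z : V, Tendsto (fun j => (inner ℝ z (vj j) : ℝ)) atTop (𝓝 (inner ℝ z v))) →
      (∀ z : V, Tendsto (fun j => (inner ℝ z (wj j) : ℝ)) atTop (𝓝 (inner ℝ z w))) →
      Tendsto (fun j => b u (vj j) (wj j)) atTop (𝓝 (b u v w)))
    -- data
    (w : V) (f : H) (lam : ℝ) (hlam : Cθ1 * ‖w‖ ^ (2 / β1) ≤ lam) :
    ∃ u : V,
      (∀ v : V,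
        (↑((inner ℝ f (ι v - ι u) : ℝ) - lam * (inner ℝ (ι u) (ι v - ι u) : ℝ)
            - a u (v - u) - b w u (v - u)) : EReal) + φ u ≤ φ v) ∧
      -- in particular, u ∈ D(∂φ)
      ∃ ξ : V →L[ℝ] ℝ, ∀ v : V, (↑(ξ (v - u)) : EReal) + φ u ≤ φ v := by
  set t0 : ℝ := ‖w‖ ^ (2 / β1) with ht0
  have ht0nn : (0:ℝ) ≤ t0 := Real.rpow_nonneg (norm_nonneg w) _
  have hlam0 : 0 ≤ lam := le_trans (mul_nonneg hCθ1.le ht0nn) hlam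
  set L : V → (V →L[ℝ] ℝ) := fun u => lam • ((innerSL ℝ (ι u)).comp ι) + a u + b w u with hL
  have hLapp : ∀ u z : V, L u z = lam * (inner ℝ (ι u) (ι z) : ℝ) + a u z + b w u z := by
    intro u z
    simp [hL]
  set fd : V →L[ℝ] ℝ := (innerSL ℝ f).comp ι with hfd
  have hfdapp : ∀ z : V, fd z = (inner ℝ f (ι z) : ℝ) := fun z => rfl
  set D := InnerProductSpace.toDual ℝ V with hD
  set A : V → V := fun u => D.symm (L u) with hA
  have hAapp : ∀ u z : V, (inner ℝ (A u) z : ℝ) = L u z := fun u z =>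
    InnerProductSpace.toDual_symm_apply
  set fh : V := D.symm fd with hfh
  have hfhapp : ∀ z : V, (inner ℝ fh z : ℝ) = (inner ℝ f (ι z) : ℝ) := fun z =>
    InnerProductSpace.toDual_symm_apply
  have hLsub : ∀ u v : V, L (u - v) = L u - L v := by
    intro u v
    ext z
    simp [hL, inner_sub_left]
    ring
  have hAsub : ∀ u v : V, A (u - v) = A u - A v := by
    intro u v
    rw [hA]
    simp only [hLsub, map_sub]
  set M0 : ℝ := lam * ‖ι‖ ^ 2 + ‖a‖ + CB * ‖w‖ with hM0
  have hLbound : ∀ u z : V, |L u z| ≤ M0 * ‖u‖ * ‖z‖ := by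
    intro u z
    have e1 : |(inner ℝ (ι u) (ι z) : ℝ)| ≤ ‖ι u‖ * ‖ι z‖ := abs_real_inner_le_norm _ _
    have e2 : ‖ι u‖ ≤ ‖ι‖ * ‖u‖ := ι.le_opNorm u
    have e3 : ‖ι z‖ ≤ ‖ι‖ * ‖z‖ := ι.le_opNorm z
    have e4 : ‖ι u‖ * ‖ι z‖ ≤ (‖ι‖ * ‖u‖) * (‖ι‖ * ‖z‖) :=
      mul_le_mul e2 e3 (norm_nonneg _) (by positivity)
    have b1 : |lam * (inner ℝ (ι u) (ι z) : ℝ)| ≤ lam * (‖ι‖ ^ 2 * ‖u‖ * ‖z‖) := by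
      rw [abs_mul, abs_of_nonneg hlam0]
      have := mul_le_mul_of_nonneg_left (e1.trans e4) hlam0
      nlinarith [this]
    have b2 : |a u z| ≤ ‖a‖ * ‖u‖ * ‖z‖ := by
      have := a.le_opNorm₂ u z
      rwa [Real.norm_eq_abs] at this
    have b3 : |b w u z| ≤ CB * ‖w‖ * ‖u‖ * ‖z‖ := hb w u z
    rw [hLapp]
    calc |lam * (inner ℝ (ι u) (ι z) : ℝ) + a u z + b w u z|
        ≤ |lam * (inner ℝ (ι u) (ι z) : ℝ)| + |a u z| + |b w u z| := abs_add_three _ _ _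
      _ ≤ lam * (‖ι‖ ^ 2 * ‖u‖ * ‖z‖) + ‖a‖ * ‖u‖ * ‖z‖ + CB * ‖w‖ * ‖u‖ * ‖z‖ := by
          linarith
      _ = M0 * ‖u‖ * ‖z‖ := by rw [hM0]; ring
  have hM0nn : 0 ≤ M0 := by
    have := hLbound 0 0
    simp at this
    positivity
  have hAbound : ∀ u : V, ‖A u‖ ≤ M0 * ‖u‖ := by
    intro u
    have hnm : ‖A u‖ = ‖L u‖ := D.symm.norm_map (L u)
    rw [hnm]
    apply ContinuousLinearMap.opNorm_le_bound _ (by positivity)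
    intro z
    rw [Real.norm_eq_abs]
    exact hLbound u z
  have hcoer : ∀ z : V, (3 / 4) * ‖z‖ ^ 2 ≤ L z z := by
    intro z
    have hb' := hH1' w z
    rw [← ht0] at hb'
    have hinner : (inner ℝ (ι z) (ι z) : ℝ) = ‖ι z‖ ^ 2 := real_inner_self_eq_norm_sq _
    rw [hLapp, ha z, hinner]
    have habs := (abs_le.mp hb').1
    nlinarith [mul_nonneg (sub_nonneg.mpr hlam) (sq_nonneg ‖ι z‖)]
  set M : ℝ := max M0 1 with hM
  have hM1 : (1:ℝ) ≤ M := le_max_right _ _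
  have hMM0 : M0 ≤ M := le_max_left _ _
  have hMpos : (0:ℝ) < M := lt_of_lt_of_le one_pos hM1
  set ρ : ℝ := 3 / (4 * M ^ 2) with hρdef
  have hρ : (0:ℝ) < ρ := by positivity
  have hABM : ∀ u : V, ‖A u‖ ≤ M * ‖u‖ := fun u =>
    (hAbound u).trans (mul_le_mul_of_nonneg_right hMM0 (norm_nonneg u))
  set κ : ℝ := Real.sqrt (1 - (9/16) / M ^ 2) with hκ
  have hcnn : (0:ℝ) ≤ 1 - (9/16) / M ^ 2 := by
    have h1 : (9/16 : ℝ) / M ^ 2 ≤ 9/16 := by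
      apply div_le_of_le_mul₀ ?_ (by norm_num) ?_
      · nlinarith
      · nlinarith
    linarith
  have hκ0 : 0 ≤ κ := Real.sqrt_nonneg _
  have hκ1 : κ < 1 := by
    have hlt : 1 - (9/16 : ℝ) / M ^ 2 < 1 := by
      have : (0:ℝ) < (9/16) / M ^ 2 := by positivity
      linarith
    calc κ < Real.sqrt 1 := Real.sqrt_lt_sqrt hcnn hlt
      _ = 1 := Real.sqrt_one
  have hcontr : ∀ d : V, ‖d - ρ • A d‖ ≤ κ * ‖d‖ := by
    intro d
    have hexp : ‖d - ρ • A d‖ ^ 2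
        = ‖d‖ ^ 2 - 2 * ρ * (inner ℝ (A d) d : ℝ) + ρ ^ 2 * ‖A d‖ ^ 2 := by
      rw [sub_eq_add_neg, norm_add_sq_real, inner_neg_right, real_inner_smul_right,
        norm_neg, norm_smul, Real.norm_eq_abs, abs_of_pos hρ, real_inner_comm]
      ring
    have h1 : (3/4) * ‖d‖ ^ 2 ≤ (inner ℝ (A d) d : ℝ) := by rw [hAapp]; exact hcoer d
    have h2 : ‖A d‖ ^ 2 ≤ (M * ‖d‖) ^ 2 := by
      apply pow_le_pow_left₀ (norm_nonneg _) (hABM d)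
    have hsq : ‖d - ρ • A d‖ ^ 2 ≤ (1 - (9/16) / M ^ 2) * ‖d‖ ^ 2 := by
      have hid : ‖d‖ ^ 2 - 2 * ρ * ((3/4) * ‖d‖ ^ 2) + ρ ^ 2 * (M * ‖d‖) ^ 2
          = (1 - (9/16) / M ^ 2) * ‖d‖ ^ 2 := by
        rw [hρdef]
        field_simp
        ring
      rw [hexp, ← hid]
      nlinarith [h1, h2, hρ.le, sq_nonneg ρ]
    calc ‖d - ρ • A d‖ = Real.sqrt (‖d - ρ • A d‖ ^ 2) := (Real.sqrt_sq (norm_nonneg _)).symm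
      _ ≤ Real.sqrt ((1 - (9/16) / M ^ 2) * ‖d‖ ^ 2) := Real.sqrt_le_sqrt hsq
      _ = κ * ‖d‖ := by rw [Real.sqrt_mul hcnn, Real.sqrt_sq (norm_nonneg _)]
  obtain ⟨v₀, hv₀⟩ := hφ_proper
  have hρne : ρ ≠ 0 := ne_of_gt hρ
  have hex : ∀ x : V, ∃ p : V, ∀ v : V,
      (↑(ρ⁻¹ * (inner ℝ (x - p) (v - p) : ℝ)) : EReal) + φ p ≤ φ v :=
    fun x => prox_exists φ hφ_conv ⟨v₀, hv₀⟩ hφ_bot hφ_lsc Cφ1 hCφ1 hφ_lb ρ hρ x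
  choose prox hprox using hex
  set T : V → V := fun u => prox (u - ρ • (A u - fh)) with hT
  have hTlip : ∀ u v : V, dist (T u) (T v) ≤ κ * dist u v := by
    intro u v
    rw [dist_eq_norm, dist_eq_norm]
    have h1 : ‖T u - T v‖ ≤ ‖(u - ρ • (A u - fh)) - (v - ρ • (A v - fh))‖ :=
      prox_nonexpansive φ ⟨v₀, hv₀⟩ hφ_bot ρ hρ _ _ _ _ (hprox _) (hprox _)
    have h2 : (u - ρ • (A u - fh)) - (v - ρ • (A v - fh)) = (u - v) - ρ • A (u - v) := by
      rw [hAsub]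
      module
    rw [h2] at h1
    exact h1.trans (hcontr (u - v))
  haveI : Nonempty V := ⟨0⟩
  have hcw : ContractingWith ⟨κ, hκ0⟩ T := by
    constructor
    · exact_mod_cast hκ1
    · exact LipschitzWith.of_dist_le_mul fun u v => hTlip u v
  set u : V := ContractingWith.fixedPoint T hcw with hu
  have hfix : T u = u := hcw.fixedPoint_isFixedPt
  simp only [hT] at hfix
  have hVI := hprox (u - ρ • (A u - fh))
  rw [hfix] at hVI
  have harg : ∀ v : V,
      ρ⁻¹ * (inner ℝ ((u - ρ • (A u - fh)) - u) (v - u) : ℝ)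
      = (inner ℝ f (ι v - ι u) : ℝ) - lam * (inner ℝ (ι u) (ι v - ι u) : ℝ)
        - a u (v - u) - b w u (v - u) := by
    intro v
    have h1 : (u - ρ • (A u - fh)) - u = (-ρ) • (A u - fh) := by module
    rw [h1, real_inner_smul_left, inner_sub_left, hAapp, hfhapp, hLapp, map_sub]
    field_simp
    ring
  refine ⟨u, fun v => ?_, innerSL ℝ (fh - A u), fun v => ?_⟩
  · have h := hVI v
    rw [harg v] at h
    exact h
  · have hxi : (innerSL ℝ (fh - A u)) (v - u)
        = ρ⁻¹ * (inner ℝ ((u - ρ • (A u - fh)) - u) (v - u) : ℝ) := by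
      rw [show (u - ρ • (A u - fh)) - u = (-ρ) • (A u - fh) by module,
        real_inner_smul_left, innerSL_apply_apply,
        show fh - A u = -(A u - fh) by abel, inner_neg_left]
      field_simp
    rw [hxi]
    exact hVI v
end

section
/- Uniqueness for the stationary Oseen-type variational inequality (Remark after Lemma 3.2): Assume the Gelfand-triple setting and hypothesis (H1). Let w ∈ V, f ∈ H, and λ ≥ C_{θ₁,1/4}·‖w‖_V^{θ₁}, where C_{θ₁,1/4} is the constant from the rephrased form of (H1) with ε = 1/4. If u ∈ V and U ∈ V both satisfy λ·(z, v−z) + a(z, v−z) + ⟨B(w,z), v−z⟩ + φ(v) − φ(z) ≥ (f, v−z) for all v ∈ V (with z = u and z = U respectively), then u = U. -/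
open MeasureTheory Set Filter Topology

/-- **Uniqueness for the stationary Oseen-type variational inequality** (Remark after
Lemma 3.2).  Under (H1), for `λ ≥ C_{θ₁,1/4}‖w‖_V^{θ₁}` any two solutions of
`λ(z,v−z) + a(z,v−z) + ⟨B(w,z),v−z⟩ + φ(v) − φ(z) ≥ (f,v−z)` for all `v ∈ V` coincide. -/
theorem uniqueness_stationary_oseen_VI
    {V H : Type*}
    [NormedAddCommGroup V] [InnerProductSpace ℝ V] [CompleteSpace V]
    [NormedAddCommGroup H] [InnerProductSpace ℝ H] [CompleteSpace H]
    (ι : V →L[ℝ] H) (hι_inj : Function.Injective ι) (hι_dense : DenseRange ι)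
    (hι_cpt : IsCompactOperator (⇑ι))
    (a : V →L[ℝ] V →L[ℝ] ℝ) (ha : ∀ v : V, a v v = ‖v‖ ^ 2)
    (b : V →L[ℝ] V →L[ℝ] V →L[ℝ] ℝ)
    (CB : ℝ) (hCB : 0 < CB) (hb : ∀ u v z : V, |b u v z| ≤ CB * ‖u‖ * ‖v‖ * ‖z‖)
    (φ : V → EReal)
    (hφ_conv : ∀ x y : V, ∀ t : ℝ, 0 ≤ t → t ≤ 1 →
      φ (t • x + (1 - t) • y) ≤ (t : EReal) * φ x + ((1 - t : ℝ) : EReal) * φ y)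
    (hφ_proper : ∃ v, φ v ≠ ⊤) (hφ_bot : ∀ v, φ v ≠ ⊥)
    (hφ_lsc : LowerSemicontinuous φ)
    -- (H1), raw form with exponent β₁ ∈ (0,1]
    (C1 β1 : ℝ) (hC1 : 0 < C1) (hβ1 : 0 < β1 ∧ β1 ≤ 1)
    (hH1 : ∀ u v : V, |b u v v| ≤ C1 * ‖u‖ * ‖v‖ * ‖ι v‖ ^ β1 * ‖v‖ ^ (1 - β1))
    -- (H1), rephrased form with θ₁ = 2/β₁ and ε = 1/4, with constant C_{θ₁,1/4}
    (Cθ1 : ℝ) (hCθ1 : 0 < Cθ1)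
    (hH1' : ∀ u v : V, |b u v v| ≤ Cθ1 * ‖u‖ ^ (2 / β1) * ‖ι v‖ ^ 2 + (1 / 4) * ‖v‖ ^ 2)
    -- data
    (w : V) (f : H) (lam : ℝ) (hlam : Cθ1 * ‖w‖ ^ (2 / β1) ≤ lam)
    (u U : V)
    (hu : ∀ v : V,
      (↑((inner ℝ f (ι v - ι u) : ℝ) - lam * (inner ℝ (ι u) (ι v - ι u) : ℝ)
          - a u (v - u) - b w u (v - u)) : EReal) + φ u ≤ φ v)
    (hU : ∀ v : V,
      (↑((inner ℝ f (ι v - ι U) : ℝ) - lam * (inner ℝ (ι U) (ι v - ι U) : ℝ)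
          - a U (v - U) - b w U (v - U)) : EReal) + φ U ≤ φ v) :
    u = U := by
  obtain ⟨v0, hv0⟩ := hφ_proper
  -- φ u and φ U are finite
  have hfin : ∀ z : V, (∀ v : V,
      (↑((inner ℝ f (ι v - ι z) : ℝ) - lam * (inner ℝ (ι z) (ι v - ι z) : ℝ)
          - a z (v - z) - b w z (v - z)) : EReal) + φ z ≤ φ v) → φ z ≠ ⊤ := by
    intro z hz htop
    have h := hz v0
    rw [htop, EReal.add_top_of_ne_bot (EReal.coe_ne_bot _)] at h
    exact hv0 (top_le_iff.mp h)
  have hut : φ u ≠ ⊤ := hfin u hu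
  have hUt : φ U ≠ ⊤ := hfin U hU
  set pu := (φ u).toReal with hpu
  set pU := (φ U).toReal with hpU
  have hcu : (pu : EReal) = φ u := EReal.coe_toReal hut (hφ_bot u)
  have hcU : (pU : EReal) = φ U := EReal.coe_toReal hUt (hφ_bot U)
  -- the two real inequalities
  have h1 := hu U
  have h2 := hU u
  rw [← hcu, ← hcU, ← EReal.coe_add, EReal.coe_le_coe_iff] at h1 h2
  -- combine
  set e := u - U with he
  have hιe : ι u - ι U = ι e := (map_sub ι u U).symm
  have hf : (inner ℝ f (ι U - ι u) : ℝ) = -(inner ℝ f (ι u - ι U) : ℝ) := by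
    rw [← neg_sub, inner_neg_right]
  have hinner : -(lam * (inner ℝ (ι u) (ι U - ι u) : ℝ))
      - lam * (inner ℝ (ι U) (ι u - ι U) : ℝ) = lam * ‖ι e‖ ^ 2 := by
    rw [← hιe, ← real_inner_self_eq_norm_sq]
    simp only [inner_sub_left, inner_sub_right, real_inner_comm (ι u) (ι U)]
    ring
  have haterm : -(a u (U - u)) - a U (u - U) = a e e := by
    simp only [he, map_sub, ContinuousLinearMap.sub_apply]
    ring
  have hbterm : -(b w u (U - u)) - b w U (u - U) = b w e e := by
    simp only [he, map_sub, ContinuousLinearMap.sub_apply]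
    ring
  have key : lam * ‖ι e‖ ^ 2 + ‖e‖ ^ 2 + b w e e ≤ 0 := by
    have hae := ha e
    linarith [h1, h2, hf, hinner, haterm, hbterm]
  have habs := hH1' w e
  have hb1 : -(Cθ1 * ‖w‖ ^ (2 / β1) * ‖ι e‖ ^ 2 + (1 / 4) * ‖e‖ ^ 2) ≤ b w e e := by
    linarith [neg_abs_le (b w e e), habs]
  have hιe2 : (0 : ℝ) ≤ ‖ι e‖ ^ 2 := sq_nonneg _
  have hmul' : Cθ1 * ‖w‖ ^ (2 / β1) * ‖ι e‖ ^ 2 ≤ lam * ‖ι e‖ ^ 2 :=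
    mul_le_mul_of_nonneg_right hlam hιe2
  have he0 : ‖e‖ ^ 2 ≤ 0 := by linarith
  have hsq : ‖e‖ ^ 2 = 0 := le_antisymm he0 (sq_nonneg _)
  have : e = 0 := norm_eq_zero.mp (by
    have := pow_eq_zero_iff (n := 2) (by norm_num) |>.mp hsq
    exact this)
  exact sub_eq_zero.mp this
end

section
/- Time-integrated variational inequality for the interpolants (Lemma 5.2): Assume the Gelfand-triple setting, the Hilbert space W, and let u⁰ ∈ D(φ), f ∈ L²(0,T;H), Δt > 0, T* := N·Δt ≤ T, and u¹,…,u^N ∈ W solve the semi-implicit scheme. Define on [0,T*] the piecewise-constant interpolants u_Δt(t) := uⁿ for (n−1)Δt < t ≤ nΔt, ū_Δt(t) := uⁿ⁻¹ for (n−1)Δt ≤ t < nΔt, f_Δt(t) := fⁿ for (n−1)Δt < t ≤ nΔt, and the piecewise-linear interpolant û_Δt(t) := ((nΔt − t)/Δt)·uⁿ⁻¹ + ((t − (n−1)Δt)/Δt)·uⁿ for (n−1)Δt ≤ t ≤ nΔt. Then for every ṽ ∈ L²(0,T*;V): ∫_0^{T*} [ (∂_t û_Δt(t) + B(ū_Δt(t),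 u_Δt(t)) − f_Δt(t), ṽ(t) − u_Δt(t)) + a(u_Δt(t), ṽ(t) − u_Δt(t)) + φ(ṽ(t)) − φ(u_Δt(t)) ] dt ≥ 0, where the integral of t ↦ φ(ṽ(t)) is well-defined in (−∞,+∞] because φ(v) ≥ −C_{φ1}(‖v‖_V + 1). -/
open MeasureTheory Set Filter Topology

/-- **Time-integrated variational inequality for the interpolants** (Lemma 5.2).
For the piecewise-constant interpolants `u_Δt(t) = uⁿ`, `ū_Δt(t) = uⁿ⁻¹`, `f_Δt(t) = fⁿ`
(on `((n−1)Δt, nΔt]`, resp. `[(n−1)Δt, nΔt)`) and the piecewise-linear interpolant `û_Δt`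
(whose a.e. derivative is `(uⁿ − uⁿ⁻¹)/Δt`), encoded via `n = ⌈t/Δt⌉₊` resp. `⌊t/Δt⌋₊`,
every `ṽ ∈ L²(0,T*;V)` satisfies
`∫₀^{T*} [(∂ₜû_Δt + B(ū_Δt,u_Δt) − f_Δt, ṽ − u_Δt) + a(u_Δt, ṽ − u_Δt) + φ(ṽ) − φ(u_Δt)] dt ≥ 0`.
The extended-real integrand `φ(ṽ(t))` is encoded via an arbitrary integrable real
function `g` with `φ(ṽ(t)) = g(t)` a.e. (otherwise the integral equals `+∞`). -/
theorem time_integrated_VI_interpolants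
    {V H W : Type*}
    [NormedAddCommGroup V] [InnerProductSpace ℝ V] [CompleteSpace V]
    [NormedAddCommGroup H] [InnerProductSpace ℝ H] [CompleteSpace H]
    [NormedAddCommGroup W] [InnerProductSpace ℝ W] [CompleteSpace W]
    -- Gelfand triple: continuous, dense, compact embedding V ↪ H
    (ι : V →L[ℝ] H) (hι_inj : Function.Injective ι) (hι_dense : DenseRange ι)
    (hι_cpt : IsCompactOperator (⇑ι))
    -- the space W, densely and compactly embedded in V
    (ιWV : W →L[ℝ] V) (hιWV_inj : Function.Injective ιWV) (hιWV_dense : DenseRange ιWV)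
    (hιWV_cpt : IsCompactOperator (⇑ιWV))
    -- the bilinear form a, with a(v,v) = ‖v‖_V²
    (a : V →L[ℝ] V →L[ℝ] ℝ) (ha : ∀ v : V, a v v = ‖v‖ ^ 2)
    -- the Navier–Stokes type nonlinearity, as a bounded trilinear form b u v w = ⟨B(u,v),w⟩
    (b : V →L[ℝ] V →L[ℝ] V →L[ℝ] ℝ)
    (CB : ℝ) (hCB : 0 < CB) (hb : ∀ u v z : V, |b u v z| ≤ CB * ‖u‖ * ‖v‖ * ‖z‖)
    -- the monotone type nonlinearity φ : convex, proper, lower semicontinuous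
    (φ : V → EReal)
    (hφ_conv : ∀ x y : V, ∀ t : ℝ, 0 ≤ t → t ≤ 1 →
      φ (t • x + (1 - t) • y) ≤ (t : EReal) * φ x + ((1 - t : ℝ) : EReal) * φ y)
    (hφ_proper : ∃ v, φ v ≠ ⊤) (hφ_bot : ∀ v, φ v ≠ ⊥)
    (hφ_lsc : LowerSemicontinuous φ)
    (Cφ1 : ℝ) (hCφ1 : 0 < Cφ1)
    (hφ_lb : ∀ v : V, (↑(-(Cφ1 * (‖v‖ + 1))) : EReal) ≤ φ v)
    -- data and discrete solution, with T* = N Δt ≤ T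
    (T Δt : ℝ) (N : ℕ) (f : ℝ → H) (u : ℕ → V)
    (hT : 0 < T) (hΔt : 0 < Δt) (hNT : (N : ℝ) * Δt ≤ T)
    (hf : MemLp f 2 (volume.restrict (Ioc (0:ℝ) T)))
    (hu0 : φ (u 0) ≠ ⊤)
    (huW : ∀ n, 1 ≤ n → n ≤ N → ∃ uw : W, ιWV uw = u n)
    (hufin : ∀ n, n ≤ N → φ (u n) ≠ ⊤)
    -- the semi-implicit scheme, with fⁿ = (1/Δt)∫_{(n−1)Δt}^{nΔt} f dt
    (hscheme : ∀ n, 1 ≤ n → n ≤ N → ∀ v : V,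
      (↑((inner ℝ (Δt⁻¹ • ∫ t in Ioc (((n : ℝ) - 1) * Δt) ((n : ℝ) * Δt), f t)
            (ι v - ι (u n)) : ℝ)
        - Δt⁻¹ * (inner ℝ (ι (u n) - ι (u (n - 1))) (ι v - ι (u n)) : ℝ)
        - a (u n) (v - u n) - b (u (n - 1)) (u n) (v - u n)) : EReal)
        + φ (u n) ≤ φ v)
    -- a test function ṽ ∈ L²(0,T*;V), with φ(ṽ(·)) realized by an integrable g
    (vt : ℝ → V) (hvt : MemLp vt 2 (volume.restrict (Ioc (0:ℝ) ((N : ℝ) * Δt))))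
    (g : ℝ → ℝ) (hg : IntegrableOn g (Ioc (0:ℝ) ((N : ℝ) * Δt)))
    (hgφ : ∀ᵐ t ∂(volume.restrict (Ioc (0:ℝ) ((N : ℝ) * Δt))), φ (vt t) = ((g t : ℝ) : EReal)) :
    0 ≤ ∫ t in Ioc (0:ℝ) ((N : ℝ) * Δt),
        ((inner ℝ (Δt⁻¹ • (ι (u ⌈t / Δt⌉₊) - ι (u (⌈t / Δt⌉₊ - 1)))
              - Δt⁻¹ • ∫ s in Ioc (((⌈t / Δt⌉₊ : ℕ) : ℝ) * Δt - Δt) (((⌈t / Δt⌉₊ : ℕ) : ℝ) * Δt), f s)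
            (ι (vt t) - ι (u ⌈t / Δt⌉₊)) : ℝ)
          + b (u ⌊t / Δt⌋₊) (u ⌈t / Δt⌉₊) (vt t - u ⌈t / Δt⌉₊)
          + a (u ⌈t / Δt⌉₊) (vt t - u ⌈t / Δt⌉₊)
          + g t - (φ (u ⌈t / Δt⌉₊)).toReal) := by

  -- It suffices to show the integrand is a.e. nonnegative on the interval.
  refine integral_nonneg_of_ae ?_
  have hmem : ∀ᵐ t ∂(volume.restrict (Ioc (0:ℝ) ((N : ℝ) * Δt))),
      t ∈ Ioc (0:ℝ) ((N : ℝ) * Δt) := ae_restrict_mem measurableSet_Ioc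
  -- the countable set of grid points is null
  have hnull : ∀ᵐ t ∂(volume.restrict (Ioc (0:ℝ) ((N : ℝ) * Δt))),
      t ∉ Set.range (fun k : ℕ => (k : ℝ) * Δt) := by
    refine ae_restrict_of_ae ?_
    have h0 : (volume : Measure ℝ) (Set.range (fun k : ℕ => (k : ℝ) * Δt)) = 0 :=
      (Set.countable_range _).measure_zero _
    exact (ae_iff.2 (by simp only [not_not]; exact h0))
  filter_upwards [hmem, hgφ, hnull] with t ht hgt hnott
  set n : ℕ := ⌈t / Δt⌉₊ with hn
  have hx0 : 0 < t / Δt := div_pos ht.1 hΔt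
  have hn1 : 1 ≤ n := Nat.ceil_pos.mpr hx0
  have hxN : t / Δt ≤ (N : ℝ) := (div_le_iff₀ hΔt).mpr ht.2
  have hnN : n ≤ N := Nat.ceil_le.mpr hxN
  -- t/Δt is not a natural number
  have hne : ∀ k : ℕ, t / Δt ≠ (k : ℝ) := by
    intro k hk
    apply hnott
    refine ⟨k, ?_⟩
    have : t = (t / Δt) * Δt := (div_mul_cancel₀ t hΔt.ne').symm
    rw [this, hk]
  have hfloor : ⌊t / Δt⌋₊ = n - 1 := by
    have h1 : (⌊t / Δt⌋₊ : ℝ) < t / Δt :=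
      lt_of_le_of_ne (Nat.floor_le hx0.le) (Ne.symm (hne _))
    have h2 : ⌊t / Δt⌋₊ < n := Nat.lt_ceil.mpr h1
    have h3 : n ≤ ⌊t / Δt⌋₊ + 1 := Nat.ceil_le_floor_add_one _
    omega
  have hs := hscheme n hn1 hnN (vt t)
  have hiv : ((n : ℝ) - 1) * Δt = (n : ℝ) * Δt - Δt := by ring
  rw [hiv] at hs
  have hc : φ (u n) = (((φ (u n)).toReal : ℝ) : EReal) :=
    (EReal.coe_toReal (hufin n hnN) (hφ_bot _)).symm
  rw [hc, hgt, ← EReal.coe_add] at hs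
  have hs' := EReal.coe_le_coe_iff.mp hs
  rw [hfloor]
  have hinner :
      (inner ℝ (Δt⁻¹ • (ι (u n) - ι (u (n - 1)))
          - Δt⁻¹ • ∫ s in Ioc ((n : ℝ) * Δt - Δt) ((n : ℝ) * Δt), f s)
        (ι (vt t) - ι (u n)) : ℝ)
      = Δt⁻¹ * (inner ℝ (ι (u n) - ι (u (n - 1))) (ι (vt t) - ι (u n)) : ℝ)
        - (inner ℝ (Δt⁻¹ • ∫ s in Ioc ((n : ℝ) * Δt - Δt) ((n : ℝ) * Δt), f s)
            (ι (vt t) - ι (u n)) : ℝ) := by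
    rw [inner_sub_left, real_inner_smul_left]
  simp only [Pi.zero_apply]
  rw [hinner]
  linarith
end

section
/- Uniqueness of strong solutions (end of Section 5): Assume the Gelfand-triple setting, the Hilbert space W, and hypotheses (H3) and (H4). Let T* > 0, f ∈ L²(0,T*;H), and let u and U both belong to H¹(0,T*;H) ∩ L∞(0,T*;V) ∩ L²(0,T*;W) and both satisfy, for a.e. t ∈ (0,T*) and all v ∈ V, the variational inequality (∂_t z(t), v − z(t)) + a(z(t), v − z(t)) + ⟨B(z(t), z(t)), v − z(t)⟩ + φ(v) − φ(z(t)) ≥ (f(t), v − z(t)) (with z = u and z = U respectively), together with u(0) = U(0). Then u(t) = U(t) in H for all t ∈ [0,T*]. -/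
open MeasureTheory Set Filter Topology

section EnergyAux
variable {H : Type*} [NormedAddCommGroup H] [InnerProductSpace ℝ H] [CompleteSpace H]

lemma my_energy_identity (T : ℝ) (g : ℝ → H) (hg : IntegrableOn g (Ioc 0 T))
    {t : ℝ} (ht : t ∈ Icc (0:ℝ) T) :
    ‖∫ s in Ioc (0:ℝ) t, g s‖ ^ 2
      = 2 * ∫ s in Ioc (0:ℝ) t, (inner ℝ (g s) (∫ r in Ioc (0:ℝ) s, g r) : ℝ) := by
  have hgt : IntegrableOn g (Ioc 0 t) := hg.mono_set (Ioc_subset_Ioc_right ht.2)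
  have hgIcc : IntegrableOn g (Icc 0 t) := by
    rwa [integrableOn_Icc_iff_integrableOn_Ioc]
  set F : ℝ → H := fun s => ∫ r in Ioc (0:ℝ) s, g r with hF
  have hFcont : ContinuousOn F (Icc 0 t) := intervalIntegral.continuousOn_primitive hgIcc
  obtain ⟨M, hM⟩ : ∃ M, ∀ x ∈ Icc (0:ℝ) t, ‖F x‖ ≤ M :=
    isCompact_Icc.exists_bound_of_continuousOn hFcont
  have hFmeas : AEStronglyMeasurable F (volume.restrict (Ioc (0:ℝ) t)) :=
    (hFcont.mono Ioc_subset_Icc_self).aestronglyMeasurable measurableSet_Ioc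
  have hgm : AEStronglyMeasurable g (volume.restrict (Ioc (0:ℝ) t)) := hgt.1
  -- I : the target-type integral
  have hI : Integrable (fun r => (inner ℝ (g r) (F r) : ℝ)) (volume.restrict (Ioc (0:ℝ) t)) := by
    refine Integrable.mono' (hgt.norm.mul_const M) (hgm.inner hFmeas) ?_
    filter_upwards [ae_restrict_mem measurableSet_Ioc] with r hr
    calc ‖(inner ℝ (g r) (F r) : ℝ)‖ ≤ ‖g r‖ * ‖F r‖ := by
          rw [Real.norm_eq_abs]; exact abs_real_inner_le_norm _ _
      _ ≤ ‖g r‖ * M := by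
          exact mul_le_mul_of_nonneg_left (hM r (Ioc_subset_Icc_self hr)) (norm_nonneg _)
  set c : H := ∫ s in Ioc (0:ℝ) t, g s with hc
  have h1 : (‖c‖:ℝ) ^ 2 = ∫ r in Ioc (0:ℝ) t, (inner ℝ c (g r) : ℝ) := by
    rw [integral_inner hgt c, real_inner_self_eq_norm_sq]
  -- splitting
  have hsplit : ∀ r ∈ Ioc (0:ℝ) t,
      (inner ℝ c (g r) : ℝ) = (inner ℝ (F r) (g r) : ℝ) + (inner ℝ (∫ s in Ioc r t, g s) (g r) : ℝ) := by
    intro r hr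
    have hcsplit : c = F r + ∫ s in Ioc r t, g s := by
      rw [hc, ← Ioc_union_Ioc_eq_Ioc hr.1.le hr.2,
        setIntegral_union (Ioc_disjoint_Ioc_of_le le_rfl) measurableSet_Ioc
          (hgt.mono_set (Ioc_subset_Ioc_right hr.2))
          (hgt.mono_set (Ioc_subset_Ioc_left hr.1.le))]
    rw [hcsplit, inner_add_left]
  -- integrability of the remainder term
  have hIF : Integrable (fun r => (inner ℝ (F r) (g r) : ℝ)) (volume.restrict (Ioc (0:ℝ) t)) := by
    apply hI.congr
    filter_upwards with r using real_inner_comm _ _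
  have hJint : Integrable (fun r => (inner ℝ (∫ s in Ioc r t, g s) (g r) : ℝ))
      (volume.restrict (Ioc (0:ℝ) t)) := by
    have h' : Integrable (fun r => (inner ℝ c (g r) : ℝ) - (inner ℝ (F r) (g r) : ℝ))
        (volume.restrict (Ioc (0:ℝ) t)) := (hgt.const_inner c).sub hIF
    apply h'.congr
    filter_upwards [ae_restrict_mem measurableSet_Ioc] with r hr
    rw [hsplit r hr]; ring
  have h2 : (∫ r in Ioc (0:ℝ) t, (inner ℝ c (g r) : ℝ))
      = (∫ r in Ioc (0:ℝ) t, (inner ℝ (F r) (g r) : ℝ))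
        + ∫ r in Ioc (0:ℝ) t, (inner ℝ (∫ s in Ioc r t, g s) (g r) : ℝ) := by
    rw [← integral_add hIF hJint]
    exact setIntegral_congr_fun measurableSet_Ioc fun r hr => hsplit r hr
  -- Fubini: the remainder term equals the first term
  set Φ : ℝ → ℝ → ℝ := fun r s => if r < s then (inner ℝ (g s) (g r) : ℝ) else 0 with hΦ
  have hΦunc : Function.uncurry Φ
      = indicator {p : ℝ × ℝ | p.1 < p.2} (fun p => (inner ℝ (g p.2) (g p.1) : ℝ)) := by
    ext p
    rw [Function.uncurry, Set.indicator_apply]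
    rfl
  have hΦint : Integrable (Function.uncurry Φ)
      ((volume.restrict (Ioc (0:ℝ) t)).prod (volume.restrict (Ioc (0:ℝ) t))) := by
    have hmeas : AEStronglyMeasurable (Function.uncurry Φ)
        ((volume.restrict (Ioc (0:ℝ) t)).prod (volume.restrict (Ioc (0:ℝ) t))) := by
      rw [hΦunc]
      exact (hgm.comp_snd.inner hgm.comp_fst).indicator (measurableSet_lt measurable_fst measurable_snd)
    refine Integrable.mono' (hgt.norm.mul_prod hgt.norm) hmeas ?_
    filter_upwards with p
    rw [hΦunc]
    by_cases hp : p ∈ {p : ℝ × ℝ | p.1 < p.2}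
    · rw [Set.indicator_of_mem hp, Real.norm_eq_abs]
      calc |(inner ℝ (g p.2) (g p.1) : ℝ)| ≤ ‖g p.2‖ * ‖g p.1‖ := abs_real_inner_le_norm _ _
        _ = ‖g p.1‖ * ‖g p.2‖ := mul_comm _ _
    · rw [Set.indicator_of_notMem hp, norm_zero]
      positivity
  have hstepA : ∀ r ∈ Ioc (0:ℝ) t,
      (inner ℝ (∫ s in Ioc r t, g s) (g r) : ℝ) = ∫ s in Ioc (0:ℝ) t, Φ r s := by
    intro r hr
    have hint : Ioc (0:ℝ) t ∩ Ioi r = Ioc r t := by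
      ext s
      simp only [mem_inter_iff, mem_Ioc, mem_Ioi]
      constructor
      · rintro ⟨⟨_, hst⟩, hrs⟩; exact ⟨hrs, hst⟩
      · rintro ⟨hrs, hst⟩; exact ⟨⟨hr.1.trans hrs, hst⟩, hrs⟩
    have e1 : ∀ s : ℝ, Φ r s = (Ioi r).indicator (fun s => (inner ℝ (g s) (g r) : ℝ)) s := by
      intro s
      rw [hΦ, Set.indicator_apply]
      rfl
    calc (inner ℝ (∫ s in Ioc r t, g s) (g r) : ℝ)
        = ∫ s in Ioc r t, (inner ℝ (g s) (g r) : ℝ) := by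
          rw [real_inner_comm, ← integral_inner (hgt.mono_set (Ioc_subset_Ioc_left hr.1.le)) (g r)]
          exact setIntegral_congr_fun measurableSet_Ioc fun s _ => real_inner_comm _ _
      _ = ∫ s in Ioc (0:ℝ) t ∩ Ioi r, (inner ℝ (g s) (g r) : ℝ) := by rw [hint]
      _ = ∫ s in Ioc (0:ℝ) t, (Ioi r).indicator (fun s => (inner ℝ (g s) (g r) : ℝ)) s := by
          rw [setIntegral_indicator measurableSet_Ioi]
      _ = ∫ s in Ioc (0:ℝ) t, Φ r s := by
          exact setIntegral_congr_fun measurableSet_Ioc fun s _ => (e1 s).symm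
  have hstepC : ∀ s ∈ Ioc (0:ℝ) t,
      (∫ r in Ioc (0:ℝ) t, Φ r s) = (inner ℝ (g s) (F s) : ℝ) := by
    intro s hs
    have hint : Ioc (0:ℝ) t ∩ Iio s = Ioo 0 s := by
      ext r
      simp only [mem_inter_iff, mem_Ioc, mem_Iio, mem_Ioo]
      constructor
      · rintro ⟨⟨h0r, _⟩, hrs⟩; exact ⟨h0r, hrs⟩
      · rintro ⟨h0r, hrs⟩; exact ⟨⟨h0r, hrs.le.trans hs.2⟩, hrs⟩
    have e1 : ∀ r : ℝ, Φ r s = (Iio s).indicator (fun r => (inner ℝ (g s) (g r) : ℝ)) r := by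
      intro r
      rw [hΦ, Set.indicator_apply]
      rfl
    calc (∫ r in Ioc (0:ℝ) t, Φ r s)
        = ∫ r in Ioc (0:ℝ) t, (Iio s).indicator (fun r => (inner ℝ (g s) (g r) : ℝ)) r :=
          setIntegral_congr_fun measurableSet_Ioc fun r _ => e1 r
      _ = ∫ r in Ioc (0:ℝ) t ∩ Iio s, (inner ℝ (g s) (g r) : ℝ) := by
          rw [setIntegral_indicator measurableSet_Iio]
      _ = ∫ r in Ioo (0:ℝ) s, (inner ℝ (g s) (g r) : ℝ) := by rw [hint]
      _ = (inner ℝ (g s) (∫ r in Ioo (0:ℝ) s, g r) : ℝ) := by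
          refine integral_inner (hgt.mono_set ?_) (g s)
          exact fun r hr => ⟨hr.1, hr.2.le.trans hs.2⟩
      _ = (inner ℝ (g s) (F s) : ℝ) := by rw [hF]; rw [← integral_Ioc_eq_integral_Ioo]
  have hfub : (∫ r in Ioc (0:ℝ) t, (inner ℝ (∫ s in Ioc r t, g s) (g r) : ℝ))
      = ∫ s in Ioc (0:ℝ) t, (inner ℝ (g s) (F s) : ℝ) := by
    calc (∫ r in Ioc (0:ℝ) t, (inner ℝ (∫ s in Ioc r t, g s) (g r) : ℝ))
        = ∫ r in Ioc (0:ℝ) t, ∫ s in Ioc (0:ℝ) t, Φ r s :=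
          setIntegral_congr_fun measurableSet_Ioc fun r hr => hstepA r hr
      _ = ∫ s in Ioc (0:ℝ) t, ∫ r in Ioc (0:ℝ) t, Φ r s :=
          MeasureTheory.integral_integral_swap hΦint
      _ = ∫ s in Ioc (0:ℝ) t, (inner ℝ (g s) (F s) : ℝ) :=
          setIntegral_congr_fun measurableSet_Ioc fun s hs => hstepC s hs
  have hIF' : (∫ r in Ioc (0:ℝ) t, (inner ℝ (F r) (g r) : ℝ))
      = ∫ r in Ioc (0:ℝ) t, (inner ℝ (g r) (F r) : ℝ) :=
    setIntegral_congr_fun measurableSet_Ioc fun r _ => real_inner_comm _ _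
  show (‖c‖:ℝ) ^ 2 = 2 * ∫ s in Ioc (0:ℝ) t, (inner ℝ (g s) (F s) : ℝ)
  rw [h1, h2, hfub, hIF']
  ring

end EnergyAux

lemma my_gronwall_zero (T : ℝ) (h K : ℝ → ℝ)
    (hh_cont : ContinuousOn h (Icc 0 T))
    (hh_nonneg : ∀ t ∈ Icc (0:ℝ) T, 0 ≤ h t)
    (hK_nonneg : ∀ᵐ s ∂(volume.restrict (Ioc (0:ℝ) T)), 0 ≤ K s)
    (hK_int : IntegrableOn K (Ioc 0 T))
    (hKh_int : IntegrableOn (fun s => K s * h s) (Ioc 0 T))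
    (hineq : ∀ t ∈ Icc (0:ℝ) T, h t ≤ ∫ s in Ioc (0:ℝ) t, K s * h s) :
    ∀ t ∈ Icc (0:ℝ) T, h t = 0 := by
  by_cases hT0 : T < 0
  · intro t ht; exact absurd (ht.1.trans ht.2) (not_le.2 hT0)
  push_neg at hT0
  set S : Set ℝ := {τ ∈ Icc (0:ℝ) T | ∀ s ∈ Icc (0:ℝ) τ, h s = 0} with hS
  have h0mem : (0:ℝ) ∈ S := by
    have h00 : h 0 = 0 := by
      have := hineq 0 ⟨le_refl 0, hT0⟩
      rw [Ioc_self, Measure.restrict_empty, integral_zero_measure] at this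
      exact le_antisymm this (hh_nonneg 0 ⟨le_refl 0, hT0⟩)
    refine ⟨⟨le_refl 0, hT0⟩, ?_⟩
    intro s hs
    rw [le_antisymm hs.2 hs.1]
    exact h00
  have hSbdd : BddAbove S := ⟨T, fun τ hτ => hτ.1.2⟩
  set τ := sSup S with hτdef
  have hτmem : τ ∈ Icc (0:ℝ) T := ⟨le_csSup hSbdd h0mem, csSup_le ⟨0, h0mem⟩ fun x hx => hx.1.2⟩
  -- every point strictly below τ is killed
  have hzero_lt : ∀ s ∈ Icc (0:ℝ) T, s < τ → h s = 0 := by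
    intro s hs hsτ
    obtain ⟨x, hxS, hsx⟩ := exists_lt_of_lt_csSup ⟨0, h0mem⟩ hsτ
    exact hxS.2 s ⟨hs.1, hsx.le⟩
  have hzero_le : ∀ s ∈ Icc (0:ℝ) τ, h s = 0 := by
    -- first h τ = 0 using the integral inequality
    have hτ0 : h τ = 0 := by
      have hint0 : (∫ s in Ioc (0:ℝ) τ, K s * h s) = 0 := by
        rw [integral_Ioc_eq_integral_Ioo]
        have : ∀ s ∈ Ioo (0:ℝ) τ, K s * h s = 0 := by
          intro s hsm
          rw [hzero_lt s ⟨hsm.1.le, hsm.2.le.trans hτmem.2⟩ hsm.2, mul_zero]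
        rw [setIntegral_congr_fun measurableSet_Ioo this, integral_zero]
      have := hineq τ hτmem
      rw [hint0] at this
      exact le_antisymm this (hh_nonneg τ hτmem)
    intro s hs
    rcases eq_or_lt_of_le hs.2 with h' | h'
    · rw [h']; exact hτ0
    · exact hzero_lt s ⟨hs.1, hs.2.trans hτmem.2⟩ h'
  have hτS : τ ∈ S := ⟨hτmem, hzero_le⟩
  -- main claim: τ = T
  rcases eq_or_lt_of_le hτmem.2 with hτT | hτT
  · intro t ht
    exact hτS.2 t ⟨ht.1, ht.2.trans_eq hτT.symm⟩
  -- otherwise derive a contradiction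
  exfalso
  -- the primitive of K from τ
  have hKIcc : IntegrableOn K (Icc τ T) := by
    rw [integrableOn_Icc_iff_integrableOn_Ioc]
    exact hK_int.mono_set (Ioc_subset_Ioc_left hτmem.1)
  set G : ℝ → ℝ := fun x => ∫ s in Ioc τ x, K s with hG
  have hGcont : ContinuousOn G (Icc τ T) := intervalIntegral.continuousOn_primitive hKIcc
  have hGτ : G τ = 0 := by
    rw [hG]
    simp
  have hcw : ContinuousWithinAt G (Icc τ T) τ := hGcont τ ⟨le_refl τ, hτT.le⟩
  obtain ⟨ε, hε, hball⟩ := Metric.continuousWithinAt_iff.1 hcw (1/2) (by norm_num)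
  set t' := min (τ + ε/2) T with ht'def
  have hτt' : τ < t' := lt_min (by linarith) hτT
  have ht'T : t' ≤ T := min_le_right _ _
  have hsub0 : Icc τ t' ⊆ Icc (0:ℝ) T := Icc_subset_Icc hτmem.1 ht'T
  have hGt' : G t' < 1/2 := by
    have h2 : dist t' τ < ε := by
      rw [Real.dist_eq, abs_of_nonneg (by linarith [hτt'.le] : (0:ℝ) ≤ t' - τ)]
      have : t' ≤ τ + ε/2 := min_le_left _ _
      linarith
    have h3 := hball ⟨hτt'.le, ht'T⟩ h2
    rw [Real.dist_eq, hGτ, sub_zero] at h3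
    exact lt_of_le_of_lt (le_abs_self _) h3
  -- max of h on [τ, t']
  obtain ⟨t₀, ht₀mem, ht₀max⟩ :=
    isCompact_Icc.exists_isMaxOn ⟨τ, le_refl τ, hτt'.le⟩ (hh_cont.mono hsub0)
  have hcnn : 0 ≤ h t₀ := hh_nonneg t₀ (hsub0 ht₀mem)
  have key : ∀ t ∈ Icc τ t', h t ≤ h t₀ * (1/2) := by
    intro t htm
    have htT : t ∈ Icc (0:ℝ) T := hsub0 htm
    have hKh1 : IntegrableOn (fun s => K s * h s) (Ioc 0 τ) :=
      hKh_int.mono_set (Ioc_subset_Ioc_right hτmem.2)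
    have hKh2 : IntegrableOn (fun s => K s * h s) (Ioc τ t) :=
      hKh_int.mono_set (Ioc_subset_Ioc hτmem.1 htT.2)
    have hsplit : (∫ s in Ioc (0:ℝ) t, K s * h s)
        = (∫ s in Ioc (0:ℝ) τ, K s * h s) + ∫ s in Ioc τ t, K s * h s := by
      rw [← Ioc_union_Ioc_eq_Ioc hτmem.1 htm.1,
        setIntegral_union (Ioc_disjoint_Ioc_of_le le_rfl) measurableSet_Ioc hKh1 hKh2]
    have hfirst : (∫ s in Ioc (0:ℝ) τ, K s * h s) = 0 := by
      have : ∀ s ∈ Ioc (0:ℝ) τ, K s * h s = 0 := by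
        intro s hsm
        rw [hzero_le s ⟨hsm.1.le, hsm.2⟩, mul_zero]
      rw [setIntegral_congr_fun measurableSet_Ioc this, integral_zero]
    have hKnn2 : ∀ᵐ s ∂(volume.restrict (Ioc τ t)), 0 ≤ K s :=
      ae_restrict_of_ae_restrict_of_subset (Ioc_subset_Ioc hτmem.1 htT.2) hK_nonneg
    have hsecond : (∫ s in Ioc τ t, K s * h s) ≤ (∫ s in Ioc τ t, K s) * h t₀ := by
      rw [← integral_mul_const]
      refine integral_mono_ae hKh2 ((hK_int.mono_set (Ioc_subset_Ioc hτmem.1 htT.2)).mul_const _) ?_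
      filter_upwards [hKnn2, ae_restrict_mem measurableSet_Ioc] with s hs1 hs2
      exact mul_le_mul_of_nonneg_left (ht₀max ⟨hs2.1.le, hs2.2.trans htm.2⟩) hs1
    have hGmono : (∫ s in Ioc τ t, K s) ≤ G t' := by
      refine setIntegral_mono_set (hK_int.mono_set (Ioc_subset_Ioc hτmem.1 ht'T)) ?_ ?_
      · exact ae_restrict_of_ae_restrict_of_subset (Ioc_subset_Ioc hτmem.1 ht'T) hK_nonneg
      · exact HasSubset.Subset.eventuallyLE (Ioc_subset_Ioc_right htm.2)
    calc h t ≤ ∫ s in Ioc (0:ℝ) t, K s * h s := hineq t htT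
      _ = ∫ s in Ioc τ t, K s * h s := by rw [hsplit, hfirst, zero_add]
      _ ≤ (∫ s in Ioc τ t, K s) * h t₀ := hsecond
      _ ≤ (1/2) * h t₀ := by
          apply mul_le_mul_of_nonneg_right _ hcnn
          exact (hGmono.trans hGt'.le)
      _ = h t₀ * (1/2) := by ring
  have hc0 : h t₀ = 0 := by
    have := key t₀ ht₀mem
    linarith
  have ht'S : t' ∈ S := by
    refine ⟨⟨hτmem.1.trans hτt'.le, ht'T⟩, ?_⟩
    intro s hsm
    rcases le_total s τ with hsτ | hsτ
    · exact hzero_le s ⟨hsm.1, hsτ⟩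
    · have : h s ≤ h t₀ * (1/2) := key s ⟨hsτ, hsm.2⟩
      have h2 : 0 ≤ h s := hh_nonneg s ⟨hsm.1, hsm.2.trans ht'T⟩
      rw [hc0] at this
      linarith
  exact absurd (le_csSup hSbdd ht'S) (not_le.2 hτt')

lemma my_young_step (C3 C4 ip X Y P Q R D N : ℝ)
    (hC4nn : 0 ≤ C4) (hC3nn : 0 ≤ C3)
    (hXnn : 0 ≤ X) (hYnn : 0 ≤ Y) (hPnn : 0 ≤ P) (hQnn : 0 ≤ Q) (hRnn : 0 ≤ R) (hDnn : 0 ≤ D)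
    (hPD : P ≤ D) (hQ2 : Q ^ 2 ≤ 1 + N) (hNnn : 0 ≤ N)
    (hmain : ip ≤ - X ^ 2 + (C4 * P * Q + C3 * R) * X * Y) :
    2 * ip ≤ ((C4 * D) ^ 2 * (1 + N) + (C3 * R) ^ 2) * Y ^ 2 := by
  have step1 : 2 * ip ≤ ((C4 * P * Q) ^ 2 + (C3 * R) ^ 2) * Y ^ 2 := by
    nlinarith [sq_nonneg (2 * X - (C4 * P * Q + C3 * R) * Y), sq_nonneg (C4 * P * Q - C3 * R),
      sq_nonneg Y]
  have hP2 : P ^ 2 ≤ D ^ 2 := pow_le_pow_left₀ hPnn hPD 2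
  have step2 : (C4 * P * Q) ^ 2 ≤ (C4 * D) ^ 2 * (1 + N) := by
    have h1 : P ^ 2 * Q ^ 2 ≤ D ^ 2 * (1 + N) :=
      mul_le_mul hP2 hQ2 (sq_nonneg Q) (sq_nonneg D)
    nlinarith [sq_nonneg C4]
  nlinarith [step1, step2, sq_nonneg Y]


set_option maxHeartbeats 2000000 in
/-- **Uniqueness of strong solutions** (end of Section 5).  Under (H3)–(H4), two solutions
`u, U ∈ H¹(0,T*;H) ∩ L∞(0,T*;V) ∩ L²(0,T*;W)` of the parabolic variational inequality with
the same data `f` and the same initial value coincide in `H` for all `t ∈ [0,T*]`. -/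
theorem uniqueness_strong_solutions
    {V H W : Type*}
    [NormedAddCommGroup V] [InnerProductSpace ℝ V] [CompleteSpace V]
    [NormedAddCommGroup H] [InnerProductSpace ℝ H] [CompleteSpace H]
    [NormedAddCommGroup W] [InnerProductSpace ℝ W] [CompleteSpace W]
    -- Gelfand triple: continuous, dense, compact embedding V ↪ H
    (ι : V →L[ℝ] H) (hι_inj : Function.Injective ι) (hι_dense : DenseRange ι)
    (hι_cpt : IsCompactOperator (⇑ι))
    -- the space W, densely and compactly embedded in V
    (ιWV : W →L[ℝ] V) (hιWV_inj : Function.Injective ιWV) (hιWV_dense : DenseRange ιWV)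
    (hιWV_cpt : IsCompactOperator (⇑ιWV))
    -- the bilinear form a, with a(v,v) = ‖v‖_V²
    (a : V →L[ℝ] V →L[ℝ] ℝ) (ha : ∀ v : V, a v v = ‖v‖ ^ 2)
    -- the Navier–Stokes type nonlinearity, as a bounded trilinear form b u v w = ⟨B(u,v),w⟩
    (b : V →L[ℝ] V →L[ℝ] V →L[ℝ] ℝ)
    (CB : ℝ) (hCB : 0 < CB) (hb : ∀ u v z : V, |b u v z| ≤ CB * ‖u‖ * ‖v‖ * ‖z‖)
    -- the monotone type nonlinearity φ : convex, proper, lower semicontinuous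
    (φ : V → EReal)
    (hφ_conv : ∀ x y : V, ∀ t : ℝ, 0 ≤ t → t ≤ 1 →
      φ (t • x + (1 - t) • y) ≤ (t : EReal) * φ x + ((1 - t : ℝ) : EReal) * φ y)
    (hφ_proper : ∃ v, φ v ≠ ⊤) (hφ_bot : ∀ v, φ v ≠ ⊥)
    (hφ_lsc : LowerSemicontinuous φ)
    -- (H3): B(u,v) ∈ H with ‖B(u,v)‖_H ≤ C₃‖u‖_W‖v‖_V for u ∈ W, v ∈ V
    (C3 : ℝ) (hC3 : 0 < C3)
    (hH3 : ∀ (uw : W) (v : V), ∃ h : H,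
      (∀ z : V, b (ιWV uw) v z = (inner ℝ h (ι z) : ℝ)) ∧ ‖h‖ ≤ C3 * ‖uw‖ * ‖v‖)
    -- (H4): B(u,v) ∈ H with ‖B(u,v)‖_H ≤ C₄‖u‖_V‖v‖_V^γ‖v‖_W^{1−γ} for u ∈ V, v ∈ W
    (C4 γ : ℝ) (hC4 : 0 < C4) (hγ : 0 < γ ∧ γ ≤ 1)
    (hH4 : ∀ (u : V) (vw : W), ∃ h : H,
      (∀ z : V, b u (ιWV vw) z = (inner ℝ h (ι z) : ℝ)) ∧
      ‖h‖ ≤ C4 * ‖u‖ * ‖ιWV vw‖ ^ γ * ‖vw‖ ^ (1 - γ))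
    -- data
    (Tstar : ℝ) (hT : 0 < Tstar)
    (f : ℝ → H) (hf : MemLp f 2 (volume.restrict (Ioc (0:ℝ) Tstar)))
    -- the two solutions and their a.e. derivatives
    (u U : ℝ → V) (u' U' : ℝ → H)
    -- u, U ∈ H¹(0,T*;H): absolutely continuous H-valued primitives of L² derivatives
    (hu'L2 : MemLp u' 2 (volume.restrict (Ioc (0:ℝ) Tstar)))
    (hU'L2 : MemLp U' 2 (volume.restrict (Ioc (0:ℝ) Tstar)))
    (huAC : ∀ t ∈ Icc (0:ℝ) Tstar, ι (u t) = ι (u 0) + ∫ s in Ioc (0:ℝ) t, u' s)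
    (hUAC : ∀ t ∈ Icc (0:ℝ) Tstar, ι (U t) = ι (U 0) + ∫ s in Ioc (0:ℝ) t, U' s)
    -- u, U ∈ L∞(0,T*;V)
    (huLinfty : ∃ C : ℝ, ∀ᵐ t ∂(volume.restrict (Ioc (0:ℝ) Tstar)), ‖u t‖ ≤ C)
    (hULinfty : ∃ C : ℝ, ∀ᵐ t ∂(volume.restrict (Ioc (0:ℝ) Tstar)), ‖U t‖ ≤ C)
    -- u, U ∈ L²(0,T*;W)
    (huL2W : ∃ uW : ℝ → W, MemLp uW 2 (volume.restrict (Ioc (0:ℝ) Tstar)) ∧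
      ∀ᵐ t ∂(volume.restrict (Ioc (0:ℝ) Tstar)), ιWV (uW t) = u t)
    (hUL2W : ∃ UW : ℝ → W, MemLp UW 2 (volume.restrict (Ioc (0:ℝ) Tstar)) ∧
      ∀ᵐ t ∂(volume.restrict (Ioc (0:ℝ) Tstar)), ιWV (UW t) = U t)
    -- the variational inequalities, a.e. on (0,T*)
    (huVI : ∀ᵐ t ∂(volume.restrict (Ioc (0:ℝ) Tstar)), ∀ v : V,
      (↑((inner ℝ (f t) (ι v - ι (u t)) : ℝ) - (inner ℝ (u' t) (ι v - ι (u t)) : ℝ)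
        - a (u t) (v - u t) - b (u t) (u t) (v - u t)) : EReal) + φ (u t) ≤ φ v)
    (hUVI : ∀ᵐ t ∂(volume.restrict (Ioc (0:ℝ) Tstar)), ∀ v : V,
      (↑((inner ℝ (f t) (ι v - ι (U t)) : ℝ) - (inner ℝ (U' t) (ι v - ι (U t)) : ℝ)
        - a (U t) (v - U t) - b (U t) (U t) (v - U t)) : EReal) + φ (U t) ≤ φ v)
    -- the same initial value
    (hinit : u 0 = U 0) :
    ∀ t ∈ Icc (0:ℝ) Tstar, ι (u t) = ι (U t) := by
  obtain ⟨Cu0, hCu0⟩ := huLinfty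
  obtain ⟨uW, huW2, huWeq⟩ := huL2W
  obtain ⟨UW, hUW2, hUWeq⟩ := hUL2W
  obtain ⟨v₀, hv₀⟩ := hφ_proper
  set μT := volume.restrict (Ioc (0:ℝ) Tstar) with hμT
  haveI : IsFiniteMeasure μT := by
    constructor
    rw [hμT, Measure.restrict_apply_univ, Real.volume_Ioc]
    exact ENNReal.ofReal_lt_top
  set Cu := max Cu0 0 with hCudef
  have hCu : ∀ᵐ t ∂μT, ‖u t‖ ≤ Cu := hCu0.mono fun t h => h.trans (le_max_left _ _)
  set g : ℝ → H := fun s => u' s - U' s with hgdef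
  have hu'int : IntegrableOn u' (Ioc 0 Tstar) :=
    memLp_one_iff_integrable.1 (hu'L2.mono_exponent one_le_two)
  have hU'int : IntegrableOn U' (Ioc 0 Tstar) :=
    memLp_one_iff_integrable.1 (hU'L2.mono_exponent one_le_two)
  have hgint : IntegrableOn g (Ioc 0 Tstar) := hu'int.sub hU'int
  set F : ℝ → H := fun s => ∫ r in Ioc (0:ℝ) s, g r with hFdef
  -- F is the H-difference of the two solutions
  have hFeq : ∀ s ∈ Icc (0:ℝ) Tstar, ι (u s) - ι (U s) = F s := by
    intro s hs
    have h1 := huAC s hs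
    have h2 := hUAC s hs
    have h3 : F s = (∫ r in Ioc (0:ℝ) s, u' r) - ∫ r in Ioc (0:ℝ) s, U' r := by
      rw [hFdef]
      exact integral_sub (hu'int.mono_set (Ioc_subset_Ioc_right hs.2))
        (hU'int.mono_set (Ioc_subset_Ioc_right hs.2))
    rw [h1, h2, hinit, h3]
    abel
  -- continuity and boundedness of F
  have hgIcc : IntegrableOn g (Icc 0 Tstar) := by
    rwa [integrableOn_Icc_iff_integrableOn_Ioc]
  have hFcont : ContinuousOn F (Icc 0 Tstar) := intervalIntegral.continuousOn_primitive hgIcc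
  obtain ⟨M, hM⟩ : ∃ M, ∀ x ∈ Icc (0:ℝ) Tstar, ‖F x‖ ≤ M :=
    isCompact_Icc.exists_bound_of_continuousOn hFcont
  have hFaesm : AEStronglyMeasurable F μT :=
    (hFcont.mono Ioc_subset_Icc_self).aestronglyMeasurable measurableSet_Ioc
  -- the Gronwall coefficient
  set K : ℝ → ℝ := fun s => (C4 * Cu ^ γ) ^ 2 * (1 + ‖uW s‖ ^ 2) + (C3 * ‖UW s‖) ^ 2 with hKdef
  have hKnn : ∀ s, 0 ≤ K s := by
    intro s
    show (0:ℝ) ≤ (C4 * Cu ^ γ) ^ 2 * (1 + ‖uW s‖ ^ 2) + (C3 * ‖UW s‖) ^ 2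
    positivity
  have huWsq : Integrable (fun s => ‖uW s‖ ^ 2) μT := by
    have := huW2.integrable_norm_rpow two_ne_zero ENNReal.ofNat_ne_top
    refine this.congr (Filter.Eventually.of_forall fun s => ?_)
    norm_num
  have hUWsq : Integrable (fun s => ‖UW s‖ ^ 2) μT := by
    have := hUW2.integrable_norm_rpow two_ne_zero ENNReal.ofNat_ne_top
    refine this.congr (Filter.Eventually.of_forall fun s => ?_)
    norm_num
  have hKint : Integrable K μT := by
    have h1 : Integrable (fun s => (C4 * Cu ^ γ) ^ 2 * (1 + ‖uW s‖ ^ 2)) μT :=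
      ((integrable_const (1:ℝ)).add huWsq).const_mul _
    have h2 : Integrable (fun s => (C3 * ‖UW s‖) ^ 2) μT := by
      have : Integrable (fun s => C3 ^ 2 * ‖UW s‖ ^ 2) μT := hUWsq.const_mul _
      exact this.congr (Filter.Eventually.of_forall fun s => by ring)
    exact h1.add h2
  -- the key almost-everywhere differential inequality
  have hae : ∀ᵐ s ∂μT, 2 * (inner ℝ (g s) (F s) : ℝ) ≤ K s * ‖F s‖ ^ 2 := by
    filter_upwards [huVI, hUVI, huWeq, hUWeq, hCu, ae_restrict_mem measurableSet_Ioc]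
      with s hVIu hVIU hWu hWU hbu hsmem
    have hsIcc : s ∈ Icc (0:ℝ) Tstar := Ioc_subset_Icc_self hsmem
    have hFs : F s = ι (u s) - ι (U s) := (hFeq s hsIcc).symm
    -- finiteness of the φ-values
    have hpu : φ (u s) ≠ ⊤ := by
      intro htop
      have h1 := hVIu v₀
      rw [htop, EReal.coe_add_top] at h1
      exact hv₀ (top_le_iff.1 h1)
    have hpU : φ (U s) ≠ ⊤ := by
      intro htop
      have h1 := hVIU v₀
      rw [htop, EReal.coe_add_top] at h1
      exact hv₀ (top_le_iff.1 h1)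
    obtain ⟨pu, hpuE⟩ : ∃ x : ℝ, φ (u s) = (x : EReal) :=
      ⟨(φ (u s)).toReal, (EReal.coe_toReal hpu (hφ_bot _)).symm⟩
    obtain ⟨pU, hpUE⟩ : ∃ x : ℝ, φ (U s) = (x : EReal) :=
      ⟨(φ (U s)).toReal, (EReal.coe_toReal hpU (hφ_bot _)).symm⟩
    have h1 := hVIu (U s)
    have h2 := hVIU (u s)
    rw [hpuE, hpUE, ← EReal.coe_add, EReal.coe_le_coe_iff] at h1
    rw [hpuE, hpUE, ← EReal.coe_add, EReal.coe_le_coe_iff] at h2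
    set w : V := u s - U s with hw
    -- linear algebra identities
    have e0 : (inner ℝ (f s) (ι (U s) - ι (u s)) : ℝ)
        = - (inner ℝ (f s) (ι (u s) - ι (U s)) : ℝ) := by
      rw [← inner_neg_right, neg_sub]
    have e1 : (inner ℝ (u' s) (ι (U s) - ι (u s)) : ℝ)
        = - (inner ℝ (u' s) (ι (u s) - ι (U s)) : ℝ) := by
      rw [← inner_neg_right, neg_sub]
    have e2 : a (u s) (U s - u s) = - a (u s) w := by
      simp only [hw, map_sub, ContinuousLinearMap.sub_apply]
      ring
    have e3 : b (u s) (u s) (U s - u s) = - b (u s) (u s) w := by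
      simp only [hw, map_sub, ContinuousLinearMap.sub_apply]
      ring
    have e4 : (inner ℝ (g s) (F s) : ℝ)
        = (inner ℝ (u' s) (ι (u s) - ι (U s)) : ℝ) - (inner ℝ (U' s) (ι (u s) - ι (U s)) : ℝ) := by
      rw [hFs, hgdef]
      exact inner_sub_left _ _ _
    have e5 : a (u s) w - a (U s) w = ‖w‖ ^ 2 := by
      rw [← ha w]
      simp only [hw, map_sub, ContinuousLinearMap.sub_apply]
      ring
    have e6a : b (u s) (u s) w - b (U s) (u s) w = b w (u s) w := by
      simp only [hw, map_sub, ContinuousLinearMap.sub_apply]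
      ring
    have e6b : b (U s) (u s) w - b (U s) (U s) w = b (U s) w w := by
      simp only [hw, map_sub, ContinuousLinearMap.sub_apply]
      ring
    have hsum : (inner ℝ (g s) (F s) : ℝ) + ‖w‖ ^ 2 + b w (u s) w + b (U s) w w ≤ 0 := by
      have e2' : a (U s) (u s - U s) = a (U s) w := by rw [hw]
      have e3' : b (U s) (U s) (u s - U s) = b (U s) (U s) w := by rw [hw]
      rw [e2', e3'] at h2
      linarith [h1, h2, e0, e1, e2, e3, e4, e5, e6a, e6b]
    -- bounds on the trilinear terms
    obtain ⟨h4, hb4, hn4⟩ := hH4 w (uW s)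
    rw [hWu] at hb4 hn4
    have hbw : |b w (u s) w| ≤ (C4 * ‖w‖ * ‖u s‖ ^ γ * ‖uW s‖ ^ (1 - γ)) * ‖F s‖ := by
      have hιw : ι w = F s := by rw [hFs, hw, map_sub]
      rw [hb4 w, hιw]
      calc |(inner ℝ h4 (F s) : ℝ)| ≤ ‖h4‖ * ‖F s‖ := abs_real_inner_le_norm _ _
        _ ≤ _ := mul_le_mul_of_nonneg_right hn4 (norm_nonneg _)
    obtain ⟨h3, hb3, hn3⟩ := hH3 (UW s) w
    rw [hWU] at hb3
    have hbU : |b (U s) w w| ≤ (C3 * ‖UW s‖ * ‖w‖) * ‖F s‖ := by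
      have hιw : ι w = F s := by rw [hFs, hw, map_sub]
      rw [hb3 w, hιw]
      calc |(inner ℝ h3 (F s) : ℝ)| ≤ ‖h3‖ * ‖F s‖ := abs_real_inner_le_norm _ _
        _ ≤ _ := mul_le_mul_of_nonneg_right hn3 (norm_nonneg _)
    -- put everything together
    set X := ‖w‖ with hX
    set Y := ‖F s‖ with hY
    set P := ‖u s‖ ^ γ with hP
    set Q := ‖uW s‖ ^ (1 - γ) with hQ
    set R := ‖UW s‖ with hR
    set D := Cu ^ γ with hD
    have hXnn : 0 ≤ X := norm_nonneg _
    have hYnn : 0 ≤ Y := norm_nonneg _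
    have hPnn : 0 ≤ P := Real.rpow_nonneg (norm_nonneg _) _
    have hQnn : 0 ≤ Q := Real.rpow_nonneg (norm_nonneg _) _
    have hRnn : 0 ≤ R := norm_nonneg _
    have hDnn : 0 ≤ D := Real.rpow_nonneg (le_max_right _ _) _
    have hPD : P ≤ D := Real.rpow_le_rpow (norm_nonneg _) hbu hγ.1.le
    have hQ2 : Q ^ 2 ≤ 1 + ‖uW s‖ ^ 2 := by
      rcases le_total (‖uW s‖) 1 with hle | hge
      · have h1 : Q ≤ 1 := Real.rpow_le_one (norm_nonneg _) hle (by linarith [hγ.2])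
        have h2 : Q ^ 2 ≤ 1 := pow_le_one₀ hQnn h1
        have := sq_nonneg (‖uW s‖)
        linarith
      · have h1 : Q ≤ ‖uW s‖ := by
          calc Q ≤ ‖uW s‖ ^ (1:ℝ) :=
                Real.rpow_le_rpow_of_exponent_le hge (by linarith [hγ.1])
            _ = ‖uW s‖ := Real.rpow_one _
        have h2 : Q ^ 2 ≤ ‖uW s‖ ^ 2 := pow_le_pow_left₀ hQnn h1 2
        linarith
    have hmain : (inner ℝ (g s) (F s) : ℝ) ≤ - X ^ 2 + (C4 * P * Q + C3 * R) * X * Y := by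
      have hb1 : - b w (u s) w ≤ (C4 * X * P * Q) * Y := by
        have := neg_abs_le (b w (u s) w)
        have h' : (C4 * X * P * Q) * Y = (C4 * ‖w‖ * ‖u s‖ ^ γ * ‖uW s‖ ^ (1-γ)) * ‖F s‖ := rfl
        linarith [hbw]
      have hb2 : - b (U s) w w ≤ (C3 * R * X) * Y := by
        have := neg_abs_le (b (U s) w w)
        have h' : (C3 * R * X) * Y = (C3 * ‖UW s‖ * ‖w‖) * ‖F s‖ := rfl
        linarith [hbU]
      have hXX : ‖w‖ ^ 2 = X ^ 2 := rfl
      linarith [hsum, hb1, hb2]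
    show 2 * (inner ℝ (g s) (F s) : ℝ)
        ≤ ((C4 * D) ^ 2 * (1 + ‖uW s‖ ^ 2) + (C3 * R) ^ 2) * Y ^ 2
    exact my_young_step C3 C4 _ X Y P Q R D (‖uW s‖ ^ 2) hC4.le hC3.le hXnn hYnn hPnn hQnn
      hRnn hDnn hPD hQ2 (sq_nonneg _) hmain
  -- integrability of the pairing s ↦ ⟪g s, F s⟫
  have hip_int : Integrable (fun s => (inner ℝ (g s) (F s) : ℝ)) μT := by
    refine Integrable.mono' (hgint.norm.mul_const M) (hgint.1.inner hFaesm) ?_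
    filter_upwards [ae_restrict_mem measurableSet_Ioc] with r hr
    calc ‖(inner ℝ (g r) (F r) : ℝ)‖ ≤ ‖g r‖ * ‖F r‖ := by
          rw [Real.norm_eq_abs]; exact abs_real_inner_le_norm _ _
      _ ≤ ‖g r‖ * M := mul_le_mul_of_nonneg_left (hM r (Ioc_subset_Icc_self hr)) (norm_nonneg _)
  have hconth : ContinuousOn (fun s => ‖F s‖ ^ 2) (Icc 0 Tstar) := (hFcont.norm).pow 2
  have hhaesm : AEStronglyMeasurable (fun s => ‖F s‖ ^ 2) μT :=
    ((hFcont.mono Ioc_subset_Icc_self).norm.pow 2).aestronglyMeasurable measurableSet_Ioc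
  have hKh_int : IntegrableOn (fun s => K s * ‖F s‖ ^ 2) (Ioc 0 Tstar) := by
    refine Integrable.mono' (hKint.mul_const (M ^ 2)) (hKint.1.mul hhaesm) ?_
    filter_upwards [ae_restrict_mem measurableSet_Ioc] with r hr
    have h1 : ‖F r‖ ^ 2 ≤ M ^ 2 := by
      have := hM r (Ioc_subset_Icc_self hr)
      nlinarith [norm_nonneg (F r)]
    rw [Real.norm_eq_abs,
      abs_of_nonneg (mul_nonneg (hKnn r) (by positivity : (0:ℝ) ≤ ‖F r‖ ^ 2))]
    exact mul_le_mul_of_nonneg_left h1 (hKnn r)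
  -- the integral inequality
  have hineq : ∀ t ∈ Icc (0:ℝ) Tstar, ‖F t‖ ^ 2 ≤ ∫ s in Ioc (0:ℝ) t, K s * ‖F s‖ ^ 2 := by
    intro t ht
    have hEI := my_energy_identity Tstar g hgint ht
    have hres : (volume.restrict (Ioc (0:ℝ) t)) ≤ μT := by
      rw [hμT]
      exact Measure.restrict_mono (Ioc_subset_Ioc_right ht.2) le_rfl
    calc ‖F t‖ ^ 2 = ∫ s in Ioc (0:ℝ) t, 2 * (inner ℝ (g s) (F s) : ℝ) := by
          rw [integral_const_mul]; exact hEI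
      _ ≤ ∫ s in Ioc (0:ℝ) t, K s * ‖F s‖ ^ 2 := by
          have hint1 : IntegrableOn (fun s => 2 * (inner ℝ (g s) (F s) : ℝ)) (Ioc (0:ℝ) t)
              volume := (hip_int.const_mul 2).mono_measure hres
          have hint2 : IntegrableOn (fun s => K s * ‖F s‖ ^ 2) (Ioc (0:ℝ) t) volume :=
            hKh_int.mono_set (Ioc_subset_Ioc_right ht.2)
          have hle : (fun s => 2 * (inner ℝ (g s) (F s) : ℝ))
              ≤ᵐ[volume.restrict (Ioc (0:ℝ) t)] fun s => K s * ‖F s‖ ^ 2 :=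
            ae_restrict_of_ae_restrict_of_subset (Ioc_subset_Ioc_right ht.2) hae
          exact integral_mono_ae hint1 hint2 hle
  have hzero := my_gronwall_zero Tstar (fun s => ‖F s‖ ^ 2) K hconth
    (fun t _ => by positivity) (Filter.Eventually.of_forall hKnn) hKint hKh_int hineq
  intro t ht
  have h0 : ‖F t‖ ^ 2 = 0 := hzero t ht
  have hF0 : F t = 0 := by
    have hn : ‖F t‖ = 0 := by nlinarith [norm_nonneg (F t)]
    exact norm_eq_zero.1 hn
  have := hFeq t ht
  rw [hF0] at this
  exact sub_eq_zero.1 this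
end
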